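/- arXiv:1703.00745 — 11 statements merged into one kernel-verified Lean document; each statement's English description precedes it below -/
import Mathlib

section
/- For every natural number t with t ≤ n, and every injective map k : Fin t → Fin n, the t × t matrix over L whose (i,j) entry is σ^j(α_{k(i)}) (for i, j ∈ Fin t) has nonzero determinant. -/
/-- The fixed subfield `L^σ` of a field automorphism `σ`. -/
def fixedSubfield {L : Type*} [Field L] (σ : L ≃+* L) : Subfield L where
  carrier := {x | σ x = x}
  mul_mem' := by intro a b ha hb; simp only [Set.mem_setOf_eq] at *; rw [map_mul, ha, hb]
  one_mem' := by simp
  add_mem' := by intro a b ha hb; simp only [Set.mem_setOf_eq] at *; rw [map_add, ha, hb]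
  zero_mem' := by simp
  neg_mem' := by intro a ha; simp only [Set.mem_setOf_eq] at *; rw [map_neg, ha]
  inv_mem' := by intro a ha; simp only [Set.mem_setOf_eq] at *; rw [map_inv₀, ha]

open Finset in
/-- If a "linearized polynomial" `∑ c_j σ^j` of degree `≤ d` kills `d+1` elements that are
linearly independent over the fixed field, then all its coefficients vanish. -/
lemma circulant_key {L : Type*} [Field L] (σ : L ≃+* L) :
    ∀ d : ℕ, ∀ c : ℕ → L, ∀ β : Fin (d+1) → L,
      LinearIndependent (fixedSubfield σ) β →
      (∀ i, ∑ j ∈ Finset.range (d+1), c j * (σ ^ j) (β i) = 0) →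
      ∀ j < d + 1, c j = 0 := by
  intro d
  induction d with
  | zero =>
      intro c β hli hker j hj
      interval_cases j
      have h0 := hker 0
      have hβ : β 0 ≠ 0 := hli.ne_zero 0
      simp only [zero_add, Finset.sum_range_one, pow_zero] at h0
      simpa [hβ] using h0
  | succ d IH =>
      intro c β hli hker
      classical
      set v := β 0 with hv
      have hv0 : v ≠ 0 := hli.ne_zero 0
      set c' : ℕ → L := fun j => c j * (σ ^ j) v with hc'
      -- the basic identity: twist by `v`
      have hmain : ∀ i : Fin (d+2),
          ∑ m ∈ range (d+2), c' m * (σ ^ m) (v⁻¹ * β i) = 0 := by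
        intro i
        rw [← hker i]
        refine sum_congr rfl fun m _ => ?_
        rw [hc', mul_assoc, ← map_mul, ← mul_assoc, mul_inv_cancel₀ hv0, one_mul]
      have hsum0 : ∑ m ∈ range (d+2), c' m = 0 := by
        have h := hmain 0
        simpa [← hv, inv_mul_cancel₀ hv0] using h
      -- the quotient coefficients and the shifted family
      set b : ℕ → L := fun j => ∑ m ∈ range (d+2), if j < m then c' m else 0 with hb
      set γ : Fin (d+1) → L := fun i => σ (v⁻¹ * β i.succ) - v⁻¹ * β i.succ with hγ
      -- γ is linearly independent over the fixed field
      have hliγ : LinearIndependent (fixedSubfield σ) γ := by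
        rw [Fintype.linearIndependent_iff]
        intro a ha
        set x : L := ∑ i, (a i : L) * (v⁻¹ * β i.succ) with hx
        have hfix : σ x = x := by
          have hsub : σ x - x = 0 := by
            rw [hx, map_sum, ← Finset.sum_sub_distrib, ← ha]
            refine sum_congr rfl fun i _ => ?_
            have hai : σ ((a i : L)) = (a i : L) := (a i).2
            rw [map_mul, hai, ← mul_sub]
            rfl
          exact sub_eq_zero.mp hsub
        have hrel : v * x = ∑ i, (a i : L) * β i.succ := by
          rw [hx, Finset.mul_sum]
          refine sum_congr rfl fun i _ => ?_
          field_simp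
        set A : Fin (d+2) → fixedSubfield σ := Fin.cons (-⟨x, hfix⟩) a with hA
        have hAsum : ∑ j, A j • β j = 0 := by
          rw [Fin.sum_univ_succ]
          have h0 : A 0 • β 0 = -(x * v) := by
            show ((A 0 : L)) * β 0 = _
            simp [hA, ← hv]
          have hs : ∀ i : Fin (d+1), A i.succ • β i.succ = (a i : L) * β i.succ := by
            intro i; show ((A i.succ : L)) * β i.succ = _; simp [hA]
          rw [h0]
          rw [Finset.sum_congr rfl fun i _ => hs i, ← hrel]
          ring
        have hA0 := Fintype.linearIndependent_iff.mp hli A hAsum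
        intro i
        have := hA0 i.succ
        simpa [hA] using this
      -- γ is killed by the quotient polynomial
      have hγker : ∀ i : Fin (d+1), ∑ j ∈ range (d+1), b j * (σ ^ j) (γ i) = 0 := by
        intro i
        set y : L := v⁻¹ * β i.succ with hy
        have hstep : ∀ j : ℕ, (σ ^ j) (γ i) = (σ ^ (j+1)) y - (σ ^ j) y := by
          intro j
          show (σ ^ j) (σ y - y) = _
          rw [map_sub, pow_succ]
          rfl
        calc ∑ j ∈ range (d+1), b j * (σ ^ j) (γ i)
            = ∑ j ∈ range (d+1), ∑ m ∈ range (d+2),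
                (if j < m then c' m * ((σ^(j+1)) y - (σ^j) y) else 0) := by
              refine sum_congr rfl fun j _ => ?_
              rw [hstep, hb, Finset.sum_mul]
              refine sum_congr rfl fun m _ => ?_
              rw [ite_mul, zero_mul]
          _ = ∑ m ∈ range (d+2), ∑ j ∈ range (d+1),
                (if j < m then c' m * ((σ^(j+1)) y - (σ^j) y) else 0) := Finset.sum_comm
          _ = ∑ m ∈ range (d+2), c' m * ((σ^m) y - y) := by
              refine sum_congr rfl fun m hm => ?_
              rw [Finset.mem_range] at hm
              have h1 : ∀ j ∈ range (d+1),
                  (if j < m then c' m * ((σ^(j+1)) y - (σ^j) y) else 0)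
                  = (if j ∈ range m then c' m * ((σ^(j+1)) y - (σ^j) y) else 0) := by
                intro j _; simp [Finset.mem_range]
              rw [Finset.sum_congr rfl h1, Finset.sum_ite_mem]
              have h2 : range (d+1) ∩ range m = range m := by
                exact Finset.inter_eq_right.mpr (Finset.range_subset_range.2 (by omega))
              rw [h2, ← Finset.mul_sum]
              congr 1
              have := Finset.sum_range_sub (fun j => (σ^j) y) m
              simpa using this
          _ = 0 := by
              rw [Finset.sum_congr rfl fun m _ => mul_sub (c' m) _ y,
                Finset.sum_sub_distrib, hmain i.succ, ← Finset.sum_mul, hsum0,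
                zero_mul, sub_zero]
      -- apply the inductive hypothesis
      have hb0 : ∀ j, j < d + 1 → b j = 0 := IH b γ hliγ hγker
      have hball : ∀ j, b j = 0 := by
        intro j
        rcases lt_or_ge j (d+1) with h | h
        · exact hb0 j h
        · show (∑ m' ∈ range (d+2), if j < m' then c' m' else 0) = 0
          refine Finset.sum_eq_zero fun m hm => ?_
          rw [Finset.mem_range] at hm
          rw [if_neg (by omega)]
      -- recover vanishing of c'
      have hc'0 : ∀ m < d + 2, c' m = 0 := by
        intro m hm
        rcases Nat.eq_zero_or_pos m with rfl | hmp
        · -- c' 0 = total sum minus the rest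
          have hb00 : (∑ m ∈ range (d+2), if 0 < m then c' m else 0) = 0 := by
            simpa [hb] using hball 0
          have hdec : c' 0 = ∑ m ∈ range (d+2), c' m - ∑ m ∈ range (d+2), (if 0 < m then c' m else 0) := by
            rw [← Finset.sum_sub_distrib]
            rw [Finset.sum_eq_single 0]
            · simp
            · intro m _ hm0
              rw [if_pos (by omega)]; ring
            · simp
          rw [hdec, hsum0, hb00, sub_zero]
        · have key : b (m - 1) - b m = c' m := by
            show (∑ m' ∈ range (d+2), if m - 1 < m' then c' m' else 0)
              - (∑ m' ∈ range (d+2), if m < m' then c' m' else 0) = c' m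
            rw [← Finset.sum_sub_distrib]
            rw [Finset.sum_eq_single m]
            · rw [if_pos (by omega), if_neg (by omega), sub_zero]
            · intro m' _ hm'
              rcases lt_or_ge m m' with h | h
              · rw [if_pos (by omega), if_pos h, sub_self]
              · rw [if_neg (by omega), if_neg (by omega), sub_self]
            · intro h; exact absurd (Finset.mem_range.2 hm) h
          rw [← key, hball, hball, sub_zero]
      intro j hj
      have := hc'0 j hj
      rw [hc'] at this
      have hσv : (σ ^ j) v ≠ 0 := (map_ne_zero _).2 hv0
      exact (mul_eq_zero.mp this).resolve_right hσv

/-- **Circulant Lemma.** If `(α_0, …, α_{n-1})` is a basis of `L` over the fixed field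
`L^σ` of an automorphism `σ` of order `n ≥ 1`, then for every `t ≤ n` and every injective
`k : Fin t → Fin n`, the `t × t` matrix with `(i,j)` entry `σ^j(α_{k i})` has nonzero
determinant. -/
theorem circulant_det_ne_zero {L : Type*} [Field L] {n : ℕ} (hn : 1 ≤ n)
    (σ : L ≃+* L) (hord : orderOf σ = n)
    (α : Module.Basis (Fin n) (fixedSubfield σ) L)
    (t : ℕ) (ht : t ≤ n) (k : Fin t → Fin n) (hk : Function.Injective k) :
    (Matrix.of fun i j : Fin t => (σ ^ (j : ℕ)) (α (k i))).det ≠ 0 := by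
  classical
  intro hdet
  rcases Nat.eq_zero_or_pos t with rfl | htpos
  · rw [Matrix.det_isEmpty] at hdet
    exact one_ne_zero hdet
  obtain ⟨d, rfl⟩ : ∃ d, t = d + 1 := ⟨t - 1, by omega⟩
  obtain ⟨c, hc0, hc⟩ := (Matrix.exists_mulVec_eq_zero_iff).2 hdet
  set cN : ℕ → L := fun j => if h : j < d + 1 then c ⟨j, h⟩ else 0 with hcN
  have hker : ∀ i : Fin (d+1),
      ∑ j ∈ Finset.range (d+1), cN j * (σ ^ j) (α (k i)) = 0 := by
    intro i
    have h := congrFun hc i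
    simp only [Matrix.mulVec, dotProduct, Matrix.of_apply, Pi.zero_apply] at h
    rw [← Fin.sum_univ_eq_sum_range (fun j => cN j * (σ ^ j) (α (k i))) (d+1), ← h]
    refine Finset.sum_congr rfl fun j _ => ?_
    rw [hcN]
    simp only [j.isLt, dif_pos, Fin.eta]
    ring
  have hli : LinearIndependent (fixedSubfield σ) (fun i : Fin (d+1) => α (k i)) :=
    α.linearIndependent.comp k hk
  have hall := circulant_key σ d cN _ hli hker
  apply hc0
  funext j
  have h := hall j j.isLt
  rw [hcN] at h
  simpa [j.isLt] using h
end

section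
/- For every natural number t with t ≤ n and every injective map k : Fin t → Fin n, the t vectors v_i ∈ L^n defined by v_i(j) = σ^j(α_{k(i)}) for j ∈ Fin n (i ∈ Fin t) are linearly independent over L. -/
lemma fixedSubfield_pow_fixes {L : Type*} [Field L] (σ : L ≃+* L)
    (c : fixedSubfield σ) (m : ℕ) : (σ ^ m) (c : L) = (c : L) := by
  induction m with
  | zero => rfl
  | succ m ih =>
    have : (σ ^ (m + 1)) (c : L) = (σ ^ m) (σ (c : L)) := by
      rw [pow_succ]; rfl
    rw [this, show σ (c : L) = (c : L) from c.2, ih]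

/-- Dedekind independence of the powers of `σ` as functions `L → L`. -/
lemma powers_linearIndependent {L : Type*} [Field L] {n : ℕ}
    (σ : L ≃+* L) (hord : orderOf σ = n) :
    LinearIndependent L (fun j : Fin n => ((σ ^ (j : ℕ) : L ≃+* L) : L → L)) := by
  have hmh := linearIndependent_monoidHom L L
  have : (fun j : Fin n => ((σ ^ (j : ℕ) : L ≃+* L) : L → L)) =
      (fun f : L →* L => (f : L → L)) ∘
        (fun j : Fin n => ((σ ^ (j : ℕ) : L ≃+* L) : L →* L)) := by
    funext j; rfl
  rw [this]
  refine hmh.comp _ ?_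
  intro a b hab
  have h1 : (σ ^ (a : ℕ) : L ≃+* L) = (σ ^ (b : ℕ) : L ≃+* L) := by
    ext x
    exact congrFun (congrArg (fun f : L →* L => (f : L → L)) hab) x
  have := pow_injOn_Iio_orderOf (x := σ)
    (by simpa [hord] using a.2) (by simpa [hord] using b.2) h1
  exact Fin.ext this

/-- If `(α_0, …, α_{n-1})` is a basis of `L` over the fixed field `L^σ` of an automorphism
`σ` of order `n ≥ 1`, then for every `t ≤ n` and every injective `k : Fin t → Fin n`, the
vectors `v_i ∈ L^n` given by `v_i(j) = σ^j(α_{k i})` are linearly independent over `L`. -/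
theorem circulant_linearIndependent {L : Type*} [Field L] {n : ℕ} (hn : 1 ≤ n)
    (σ : L ≃+* L) (hord : orderOf σ = n)
    (α : Module.Basis (Fin n) (fixedSubfield σ) L)
    (t : ℕ) (ht : t ≤ n) (k : Fin t → Fin n) (hk : Function.Injective k) :
    LinearIndependent L
      (fun i : Fin t => fun j : Fin n => (σ ^ (j : ℕ)) (α (k i))) := by
  classical
  set M : Matrix (Fin n) (Fin n) L := fun j i => (σ ^ (j : ℕ)) (α i) with hM
  -- rows of M are linearly independent over L
  have hrows : LinearIndependent L (fun j : Fin n => M j) := by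
    rw [Fintype.linearIndependent_iff]
    intro d hd
    -- hd : ∑ j, d j • M j = 0 , i.e. for each i, ∑ j d j * σ^j (α i) = 0
    have hfun : ∑ j : Fin n, d j • ((σ ^ (j : ℕ) : L ≃+* L) : L → L) = 0 := by
      funext x
      have hx : x = ∑ i : Fin n, ((α.repr x i : L) * α i) := by
        conv_lhs => rw [← α.sum_repr x]
        exact Finset.sum_congr rfl fun i _ => rfl
      calc (∑ j : Fin n, d j • ((σ ^ (j : ℕ) : L ≃+* L) : L → L)) x
          = ∑ j : Fin n, d j * (σ ^ (j : ℕ)) x := by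
            simp [Finset.sum_apply]
        _ = ∑ j : Fin n, ∑ i : Fin n, (α.repr x i : L) * (d j * (σ ^ (j : ℕ)) (α i)) := by
            refine Finset.sum_congr rfl fun j _ => ?_
            conv_lhs => rw [hx]
            rw [map_sum, Finset.mul_sum]
            refine Finset.sum_congr rfl fun i _ => ?_
            rw [map_mul, fixedSubfield_pow_fixes]
            ring
        _ = ∑ i : Fin n, (α.repr x i : L) * ∑ j : Fin n, d j * (σ ^ (j : ℕ)) (α i) := by
            rw [Finset.sum_comm]
            simp [Finset.mul_sum]
        _ = 0 := by
            refine Finset.sum_eq_zero fun i _ => ?_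
            have := congrFun hd i
            simp only [Finset.sum_apply, Pi.smul_apply, smul_eq_mul, Pi.zero_apply] at this
            rw [hM] at this
            simp only [this, mul_zero]
    have hli := powers_linearIndependent σ hord
    rw [Fintype.linearIndependent_iff] at hli
    exact hli d hfun
  have hM_unit : IsUnit M := Matrix.linearIndependent_rows_iff_isUnit.mp hrows
  have hcols : LinearIndependent L (fun i : Fin n => M.transpose i) :=
    Matrix.linearIndependent_cols_iff_isUnit.mpr hM_unit
  exact hcols.comp k hk
end

section
/- Let l ∈ Fin n and let l_1, …, l_s ∈ Fin n be pairwise distinct indices. Then the vector α_l^{[σ]} = (α_l, σ(α_l), …, σ^{n-1}(α_l)) ∈ L^n lies in the L-linear span of the vectors α_{l_1}^{[σ]}, …, α_{l_s}^{[σ]} if and only if l = l_i for some i ∈ {1, …, s}. -/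
lemma pow_fixes {L : Type*} [Field L] (σ : L ≃+* L) (m : ℕ) (k : fixedSubfield σ) :
    (σ ^ m) (k : L) = k := by
  induction m with
  | zero => rfl
  | succ m ih =>
    rw [pow_succ]
    show (σ ^ m) (σ (k : L)) = k
    rw [show σ (k : L) = k from k.2, ih]

/-- Let `(α_0, …, α_{n-1})` be a basis of `L` over the fixed field `L^σ` of an automorphism
`σ` of order `n ≥ 1`, and for `γ ∈ L` let `γ^{[σ]} = (γ, σ(γ), …, σ^{n-1}(γ)) ∈ L^n`.
If `l ∈ Fin n` and `l_1, …, l_s ∈ Fin n` are pairwise distinct, then `α_l^{[σ]}` lies in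
the `L`-span of `α_{l_1}^{[σ]}, …, α_{l_s}^{[σ]}` iff `l = l_i` for some `i`. -/
theorem mem_span_iff_eq_index {L : Type*} [Field L] {n : ℕ} (hn : 1 ≤ n)
    (σ : L ≃+* L) (hord : orderOf σ = n)
    (α : Module.Basis (Fin n) (fixedSubfield σ) L)
    (l : Fin n) (s : ℕ) (ls : Fin s → Fin n) (hls : Function.Injective ls) :
    ((fun j : Fin n => (σ ^ (j : ℕ)) (α l)) ∈
        Submodule.span L
          (Set.range fun i : Fin s => fun j : Fin n => (σ ^ (j : ℕ)) (α (ls i))))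
      ↔ ∃ i : Fin s, l = ls i := by
  let K := fixedSubfield σ
  -- Dedekind independence of the characters σ^j, j < n
  have hchar : LinearIndependent L
      (fun j : Fin n => ⇑((σ ^ (j : ℕ)).toMonoidHom)) := by
    refine (linearIndependent_monoidHom L L).comp
      (fun j : Fin n => (σ ^ (j : ℕ)).toMonoidHom) ?_
    intro j k h
    have : σ ^ (j : ℕ) = σ ^ (k : ℕ) := by
      ext x
      exact DFunLike.congr_fun h x
    have hj : (j : ℕ) ∈ Set.Iio (orderOf σ) := by simp [hord, j.2]
    have hk : (k : ℕ) ∈ Set.Iio (orderOf σ) := by simp [hord, k.2]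
    exact Fin.ext (pow_injOn_Iio_orderOf hj hk this)
  -- rows of the matrix (σ^j (α i)) are L-linearly independent
  have hrows : LinearIndependent L
      (fun j : Fin n => fun i : Fin n => (σ ^ (j : ℕ)) (α i)) := by
    rw [Fintype.linearIndependent_iff]
    intro g hg
    -- build the K-linear map x ↦ ∑ j, g j * σ^j x
    let T : L →ₗ[K] L :=
      { toFun := fun x => ∑ j : Fin n, g j * (σ ^ (j : ℕ)) x
        map_add' := by
          intro x y
          simp [map_add, mul_add, Finset.sum_add_distrib]
        map_smul' := by
          intro k x
          show ∑ j : Fin n, g j * (σ ^ (j : ℕ)) ((k : L) * x)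
            = (k : L) * ∑ j : Fin n, g j * (σ ^ (j : ℕ)) x
          rw [Finset.mul_sum]
          refine Finset.sum_congr rfl fun j _ => ?_
          rw [map_mul, pow_fixes σ _ k]
          ring }
    have hT : T = 0 := by
      apply α.ext
      intro i
      have := congr_fun hg i
      simpa [T] using this
    have : ∀ j : Fin n, g j • ⇑((σ ^ (j : ℕ)).toMonoidHom) = fun x : L => g j * (σ ^ (j : ℕ)) x :=
      fun j => rfl
    have hsum : ∑ j : Fin n, g j • ⇑((σ ^ (j : ℕ)).toMonoidHom) = 0 := by
      funext x
      have := congr_arg (fun f : L →ₗ[K] L => f x) hT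
      simpa [T, Finset.sum_apply] using this
    exact Fintype.linearIndependent_iff.mp hchar g hsum
  -- hence the matrix is invertible, and the columns are independent too
  have hA : IsUnit (Matrix.of fun j i : Fin n => (σ ^ (j : ℕ)) (α i)) :=
    Matrix.linearIndependent_rows_iff_isUnit.mp hrows
  have hcols : LinearIndependent L
      (fun i : Fin n => fun j : Fin n => (σ ^ (j : ℕ)) (α i)) := by
    have := Matrix.linearIndependent_cols_iff_isUnit.mpr hA
    exact this
  constructor
  · intro hmem
    by_contra hcon
    push_neg at hcon
    have hl : l ∉ Set.range ls := by
      rintro ⟨i, rfl⟩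
      exact hcon i rfl
    have := hcols.notMem_span_image (s := Set.range ls) hl
    apply this
    have : ((fun i : Fin n => fun j : Fin n => (σ ^ (j : ℕ)) (α i)) '' Set.range ls)
        = Set.range fun i : Fin s => fun j : Fin n => (σ ^ (j : ℕ)) (α (ls i)) := by
      rw [← Set.range_comp]; rfl
    rw [this]
    exact hmem
  · rintro ⟨i, rfl⟩
    exact Submodule.subset_span ⟨i, rfl⟩
end

section
/- Let β = α⁻¹·σ(α). The n × n matrix N over L whose (i,k) entry is the i-th σ-norm of σ^k(β), namely N(i,k) = ∏_{j=0}^{i-1} σ^{k+j}(β) (with the empty product equal to 1), for i, k ∈ Fin n, is invertible. -/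
lemma sigmaPow_fixed {L : Type*} [Field L] (σ : L ≃+* L) (m : ℕ)
    (c : fixedSubfield σ) : (σ ^ m) (c : L) = (c : L) := by
  induction m with
  | zero => rfl
  | succ m ih =>
    have hc : σ (c : L) = (c : L) := c.2
    rw [pow_succ]
    show (σ ^ m) (σ (c : L)) = (c : L)
    rw [hc, ih]

def sigmaPowLin {L : Type*} [Field L] (σ : L ≃+* L) (m : ℕ) :
    L →ₗ[fixedSubfield σ] L where
  toFun := fun x => (σ ^ m) x
  map_add' := fun x y => map_add _ x y
  map_smul' := fun c x => by
    show (σ ^ m) ((c : L) * x) = (c : L) * (σ ^ m) x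
    rw [map_mul, sigmaPow_fixed]

/-- Let `α ∈ L` generate a normal basis `(α, σ(α), …, σ^{n-1}(α))` of `L` over the fixed
field `L^σ` of an automorphism `σ` of order `n ≥ 1`, and let `β = α⁻¹·σ(α)`. Then the
`n × n` matrix whose `(i,k)` entry is the `i`-th `σ`-norm
`N_i(σ^k(β)) = ∏_{j<i} σ^{k+j}(β)` is invertible. -/
theorem norm_matrix_isUnit {L : Type*} [Field L] {n : ℕ} (hn : 1 ≤ n)
    (σ : L ≃+* L) (hord : orderOf σ = n) (α : L)
    (b : Module.Basis (Fin n) (fixedSubfield σ) L)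
    (hb : ∀ i : Fin n, (b i : L) = (σ ^ (i : ℕ)) α) :
    IsUnit (Matrix.of fun i k : Fin n =>
      ∏ j ∈ Finset.range (i : ℕ), (σ ^ ((k : ℕ) + j)) (α⁻¹ * σ α)) := by
  have hα : α ≠ 0 := by
    have h0 := b.ne_zero ⟨0, hn⟩
    intro h
    apply h0
    have := hb ⟨0, hn⟩
    simp only [pow_zero] at this
    rw [h] at this
    exact_mod_cast this
  have hσα : ∀ m : ℕ, (σ ^ m) α ≠ 0 := fun m h =>
    hα ((σ ^ m).injective (by rw [h, map_zero]))
  -- telescoping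
  have key : ∀ (k i : ℕ), ∏ j ∈ Finset.range i, (σ ^ (k + j)) (α⁻¹ * σ α)
      = ((σ ^ k) α)⁻¹ * (σ ^ (k + i)) α := by
    intro k i
    induction i with
    | zero => rw [Finset.range_zero, Finset.prod_empty, add_zero,
        inv_mul_cancel₀ (hσα k)]
    | succ i ih =>
      rw [Finset.prod_range_succ, ih]
      have h1 : (σ ^ (k + i)) (α⁻¹ * σ α) = ((σ ^ (k + i)) α)⁻¹ * (σ ^ (k + i + 1)) α := by
        rw [map_mul, map_inv₀]
        congr 1
      rw [h1, mul_assoc, ← mul_assoc ((σ ^ (k + i)) α), mul_inv_cancel₀ (hσα (k + i)),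
        one_mul, ← add_assoc]
  rw [Matrix.isUnit_iff_isUnit_det, isUnit_iff_ne_zero]
  intro hdet
  obtain ⟨v, hv0, hv⟩ := Matrix.exists_vecMul_eq_zero_iff.mpr hdet
  -- for each k, ∑ i, v i * σ^i (b k) = 0
  have hk : ∀ k : Fin n, ∑ i : Fin n, v i * (σ ^ (i : ℕ)) (b k) = 0 := by
    intro k
    have h := congrFun hv k
    simp only [Matrix.vecMul, dotProduct, Matrix.of_apply, Pi.zero_apply] at h
    have h2 : ∑ i : Fin n, v i * (((σ ^ (k : ℕ)) α)⁻¹ * (σ ^ ((k : ℕ) + (i : ℕ))) α) = 0 := by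
      rw [← h]; exact Finset.sum_congr rfl fun i _ => by rw [key]
    have h3 : ((σ ^ (k : ℕ)) α)⁻¹ * ∑ i : Fin n, v i * (σ ^ ((k : ℕ) + (i : ℕ))) α = 0 := by
      rw [Finset.mul_sum, ← h2]
      exact Finset.sum_congr rfl fun i _ => by ring
    have h4 : ∑ i : Fin n, v i * (σ ^ ((k : ℕ) + (i : ℕ))) α = 0 := by
      rcases mul_eq_zero.mp h3 with h | h
      · exact absurd h (inv_ne_zero (hσα _))
      · exact h
    rw [← h4]
    refine Finset.sum_congr rfl fun i _ => ?_
    congr 1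
    rw [hb k, add_comm, pow_add]
    rfl
  -- the linear map ∑ v i • σ^i vanishes
  have hF : (∑ i : Fin n, v i • sigmaPowLin σ (i : ℕ)) = 0 := by
    apply b.ext
    intro k
    simp only [LinearMap.coe_sum, Finset.sum_apply, LinearMap.smul_apply,
      LinearMap.zero_apply, smul_eq_mul]
    exact hk k
  have hFx : ∀ x : L, ∑ i : Fin n, v i * (σ ^ (i : ℕ)) x = 0 := by
    intro x
    have := congrArg (fun f => f x) hF
    simpa [sigmaPowLin] using this
  -- Dedekind independence of characters
  have hinj : Function.Injective
      (fun i : Fin n => ((σ ^ (i : ℕ)).toMulEquiv.toMonoidHom : L →* L)) := by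
    intro i j h
    have heq : σ ^ (i : ℕ) = σ ^ (j : ℕ) :=
      RingEquiv.ext fun x => congrArg (fun f : L →* L => f x) h
    have : (i : ℕ) = (j : ℕ) := by
      apply pow_injOn_Iio_orderOf (by rw [hord]; exact i.2) (by rw [hord]; exact j.2) heq
    exact Fin.ext this
  have li := (linearIndependent_monoidHom L L).comp _ hinj
  rw [Fintype.linearIndependent_iff] at li
  apply hv0
  funext i
  refine li v ?_ i
  funext x
  simp only [Finset.sum_apply, Pi.smul_apply, Function.comp_apply, smul_eq_mul, Pi.zero_apply]
  exact hFx x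
end

section
/- For every subset T ⊆ Fin n of cardinality m, the L-subspace V_T = { f : Fin n → L | ∀ k ∈ T, Σ_{j=0}^{n-1} f(j)·σ^{k+j}(α) = 0 } of L^n has dimension n − m over L. -/
/-- For a subset `T ⊆ Fin n`, the `L`-subspace of `L^n` of all `f` with
`∑ j, f j · σ^{k+j}(α) = 0` for every `k ∈ T`. -/
def VT {L : Type*} [Field L] {n : ℕ} (σ : L ≃+* L) (α : L) (T : Finset (Fin n)) :
    Submodule L (Fin n → L) where
  carrier := {f | ∀ k ∈ T, ∑ j : Fin n, f j * (σ ^ ((k : ℕ) + (j : ℕ))) α = 0}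
  add_mem' := by
    intro f g hf hg k hk
    simp only [Pi.add_apply, add_mul, Finset.sum_add_distrib]
    rw [hf k hk, hg k hk, add_zero]
  zero_mem' := by intro k hk; simp
  smul_mem' := by
    intro c f hf k hk
    simp only [Pi.smul_apply, smul_eq_mul, mul_assoc]
    rw [← Finset.mul_sum, hf k hk, mul_zero]

lemma fixed_pow_aux {L : Type*} [Field L] (σ : L ≃+* L) (a : L) (ha : σ a = a) (k : ℕ) :
    (σ ^ k) a = a := by
  induction k with
  | zero => rfl
  | succ k ih => rw [pow_succ]; show (σ ^ k) (σ a) = a; rw [ha, ih]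

lemma normal_matrix_det_ne_zero {L : Type*} [Field L] {n : ℕ}
    (σ : L ≃+* L) (hord : orderOf σ = n) (α : L)
    (b : Module.Basis (Fin n) (fixedSubfield σ) L)
    (hb : ∀ i : Fin n, (b i : L) = (σ ^ (i : ℕ)) α) :
    (Matrix.of fun k j : Fin n => (σ ^ ((k : ℕ) + (j : ℕ))) α).det ≠ 0 := by
  classical
  intro hdet0
  obtain ⟨c, hc0, hcv⟩ := Matrix.exists_mulVec_eq_zero_iff.2 hdet0
  have key : ∀ j : Fin n, ∑ k : Fin n, c k * (σ ^ ((k : ℕ) + (j : ℕ))) α = 0 := by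
    intro j
    have h := congrFun hcv j
    simp only [Matrix.mulVec, dotProduct, Pi.zero_apply, Matrix.of_apply] at h
    rw [← h]
    exact Finset.sum_congr rfl fun k _ => by rw [mul_comm, Nat.add_comm]
  have hpsi : ∀ x : L, ∑ k : Fin n, c k * (σ ^ (k : ℕ)) x = 0 := by
    intro x
    have hx : x = ∑ j : Fin n, ((b.repr x j : L) * (σ ^ (j : ℕ)) α) := by
      conv_lhs => rw [← b.sum_repr x]
      exact Finset.sum_congr rfl fun j _ => by rw [← hb j]; rfl
    have hsk : ∀ k : Fin n, (σ ^ (k : ℕ)) x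
        = ∑ j : Fin n, (b.repr x j : L) * (σ ^ ((k : ℕ) + (j : ℕ))) α := by
      intro k
      conv_lhs => rw [hx]
      rw [map_sum]
      refine Finset.sum_congr rfl fun j _ => ?_
      have hfix : (σ ^ (k : ℕ)) ((b.repr x j : L)) = (b.repr x j : L) :=
        fixed_pow_aux σ _ (b.repr x j).2 _
      have hcomp : (σ ^ ((k : ℕ) + (j : ℕ))) α = (σ ^ (k : ℕ)) ((σ ^ (j : ℕ)) α) := by
        rw [pow_add]; rfl
      rw [map_mul, hfix, hcomp]
    calc ∑ k : Fin n, c k * (σ ^ (k : ℕ)) x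
        = ∑ k : Fin n, ∑ j : Fin n,
            (b.repr x j : L) * (c k * (σ ^ ((k : ℕ) + (j : ℕ))) α) := by
          refine Finset.sum_congr rfl fun k _ => ?_
          rw [hsk k, Finset.mul_sum]
          exact Finset.sum_congr rfl fun j _ => by ring
      _ = ∑ j : Fin n, (b.repr x j : L) *
            (∑ k : Fin n, c k * (σ ^ ((k : ℕ) + (j : ℕ))) α) := by
          rw [Finset.sum_comm]
          exact Finset.sum_congr rfl fun j _ => by rw [Finset.mul_sum]
      _ = 0 := by simp only [key, mul_zero, Finset.sum_const_zero]
  -- Dedekind independence of characters gives a contradiction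
  have hinj : Function.Injective
      (fun k : Fin n => (((σ ^ (k : ℕ) : L ≃+* L) : L →+* L) : L →* L)) := by
    intro k k' h
    have hσ : (σ ^ (k : ℕ) : L ≃+* L) = σ ^ (k' : ℕ) := by
      ext x
      exact DFunLike.congr_fun h x
    have := pow_injOn_Iio_orderOf (x := σ)
      (by rw [hord]; exact k.2) (by rw [hord]; exact k'.2) hσ
    exact Fin.ext this
  have li := (linearIndependent_monoidHom L L).comp
    (fun k : Fin n => (((σ ^ (k : ℕ) : L ≃+* L) : L →+* L) : L →* L)) hinj
  have := Fintype.linearIndependent_iff.1 li c ?_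
  · exact hc0 (funext fun k => this k)
  · funext x
    simpa using hpsi x

/-- Let `α ∈ L` generate a normal basis of `L` over the fixed field `L^σ` of an
automorphism `σ` of order `n ≥ 1`. For every subset `T ⊆ Fin n` of cardinality `m`,
the subspace `V_T ≤ L^n` has `L`-dimension `n − m`. -/
theorem finrank_VT {L : Type*} [Field L] {n : ℕ} (hn : 1 ≤ n)
    (σ : L ≃+* L) (hord : orderOf σ = n) (α : L)
    (b : Module.Basis (Fin n) (fixedSubfield σ) L)
    (hb : ∀ i : Fin n, (b i : L) = (σ ^ (i : ℕ)) α)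
    (T : Finset (Fin n)) (m : ℕ) (hT : T.card = m) :
    Module.finrank L ↥(VT σ α T) = n - m := by
  classical
  set A : Matrix (Fin n) (Fin n) L :=
    Matrix.of (fun k j : Fin n => (σ ^ ((k : ℕ) + (j : ℕ))) α) with hA
  have hdet : A.det ≠ 0 := normal_matrix_det_ne_zero σ hord α b hb
  have hunit : IsUnit A := (Matrix.isUnit_iff_isUnit_det A).2 (isUnit_iff_ne_zero.2 hdet)
  set Φ : (Fin n → L) →ₗ[L] ({x // x ∈ T} → L) :=
    (LinearMap.funLeft L L (Subtype.val : {x // x ∈ T} → Fin n)).comp A.mulVecLin with hΦ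
  have hker : LinearMap.ker Φ = VT σ α T := by
    ext f
    simp only [LinearMap.mem_ker, hΦ, LinearMap.comp_apply, Matrix.mulVecLin_apply]
    constructor
    · intro h k hk
      have := congrFun h ⟨k, hk⟩
      simp only [LinearMap.funLeft_apply, Matrix.mulVec, dotProduct,
        Matrix.of_apply, Pi.zero_apply, hA] at this
      rw [← this]
      exact Finset.sum_congr rfl fun j _ => by rw [mul_comm]
    · intro h
      funext k
      have := h k.1 k.2
      simp only [LinearMap.funLeft_apply, Matrix.mulVec, dotProduct,
        Matrix.of_apply, Pi.zero_apply, hA]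
      rw [← this]
      exact Finset.sum_congr rfl fun j _ => by rw [mul_comm]
  have hmv : Function.Surjective A.mulVecLin := by
    intro v
    refine ⟨A⁻¹.mulVec v, ?_⟩
    rw [Matrix.mulVecLin_apply, Matrix.mulVec_mulVec,
      Matrix.mul_nonsing_inv A (isUnit_iff_ne_zero.2 hdet), Matrix.one_mulVec]
  have hsurj : Function.Surjective Φ := by
    rw [hΦ, LinearMap.coe_comp]
    exact (LinearMap.funLeft_surjective_of_injective L L _ Subtype.val_injective).comp hmv
  have hrn := LinearMap.finrank_range_add_finrank_ker Φ
  rw [LinearMap.range_eq_top.2 hsurj, hker] at hrn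
  have h1 : Module.finrank L (⊤ : Submodule L ({x // x ∈ T} → L)) = m := by
    rw [finrank_top, Module.finrank_pi]
    simp [hT]
  have h2 : Module.finrank L (Fin n → L) = n := by simp
  rw [h1, h2] at hrn
  omega
end

section
/- For every subset T ⊆ Fin n and every s ∈ Fin n, the inclusion V_T ⊆ V_{{s}} holds if and only if s ∈ T. -/
lemma fixed_pow {L : Type*} [Field L] (σ : L ≃+* L) {x : L} (hx : σ x = x) (k : ℕ) :
    (σ ^ k) x = x := by
  induction k with
  | zero => rfl
  | succ m ih => rw [pow_succ]; show (σ ^ m) (σ x) = x; rw [hx, ih]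

/-- Let `α ∈ L` generate a normal basis of `L` over the fixed field `L^σ` of an
automorphism `σ` of order `n ≥ 1`. For every subset `T ⊆ Fin n` and every `s ∈ Fin n`,
`V_T ⊆ V_{{s}}` iff `s ∈ T`. -/
theorem VT_le_singleton_iff {L : Type*} [Field L] {n : ℕ} (hn : 1 ≤ n)
    (σ : L ≃+* L) (hord : orderOf σ = n) (α : L)
    (b : Module.Basis (Fin n) (fixedSubfield σ) L)
    (hb : ∀ i : Fin n, (b i : L) = (σ ^ (i : ℕ)) α)
    (T : Finset (Fin n)) (s : Fin n) :
    VT σ α T ≤ VT σ α {s} ↔ s ∈ T := by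
  constructor
  · intro hle
    by_contra hs
    set A : Matrix (Fin n) (Fin n) L := fun k j => (σ ^ ((k : ℕ) + (j : ℕ))) α with hA
    -- A is invertible
    have hdet : A.det ≠ 0 := by
      intro h0
      obtain ⟨v, hv, hv0⟩ := Matrix.exists_vecMul_eq_zero_iff.mpr h0
      -- define K-linear map g
      have hv0' : ∀ j : Fin n, ∑ k : Fin n, v k * (σ ^ ((k : ℕ) + (j : ℕ))) α = 0 := by
        intro j
        have := congrFun hv0 j
        simpa [Matrix.vecMul, dotProduct, hA] using this
      let g : L →ₗ[fixedSubfield σ] L :=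
      { toFun := fun x => ∑ k : Fin n, v k * (σ ^ (k : ℕ)) x
        map_add' := by intro x y; simp [map_add, mul_add, Finset.sum_add_distrib]
        map_smul' := by
          intro m x
          simp only [RingHom.id_apply]
          rw [Finset.smul_sum]
          refine Finset.sum_congr rfl fun k _ => ?_
          have hm : (σ ^ (k : ℕ)) ((m : L) * x) = (m : L) * (σ ^ (k : ℕ)) x := by
            rw [map_mul, fixed_pow σ m.2]
          rw [Subfield.smul_def, Subfield.smul_def, smul_eq_mul, smul_eq_mul, hm]
          ring }
      have hg0 : g = 0 := by
        apply b.ext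
        intro i
        have : g (b i) = ∑ k : Fin n, v k * (σ ^ ((k : ℕ) + (i : ℕ))) α := by
          simp only [g, LinearMap.coe_mk, AddHom.coe_mk, hb i]
          refine Finset.sum_congr rfl fun k _ => ?_
          rw [pow_add]; rfl
        rw [LinearMap.zero_apply, this, hv0' i]
      -- linear independence of powers of σ as monoid homs
      have hΦinj : Function.Injective
          (fun k : Fin n => ((σ ^ (k : ℕ) : L ≃+* L) : L →* L)) := by
        intro k k' h
        have h2 : (σ ^ (k : ℕ) : L ≃+* L) = σ ^ (k' : ℕ) := by
          ext x
          exact DFunLike.congr_fun h x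
        have := pow_injOn_Iio_orderOf (x := σ)
          (by simpa [hord] using k.isLt) (by simpa [hord] using k'.isLt) h2
        exact Fin.ext this
      have hli : LinearIndependent L
          (fun k : Fin n => ((((σ ^ (k : ℕ) : L ≃+* L)) : L →* L) : L → L)) :=
        (linearIndependent_monoidHom L L).comp _ hΦinj
      have hvz : v = 0 := by
        have hsum : ∑ k : Fin n,
            v k • ((((σ ^ (k : ℕ) : L ≃+* L)) : L →* L) : L → L) = 0 := by
          funext x
          have := congrFun (congrArg (fun (h : L →ₗ[fixedSubfield σ] L) => (h : L → L)) hg0) x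
          simpa [g] using this
        funext k
        exact Fintype.linearIndependent_iff.mp hli v hsum k
      exact hv (by simpa using hvz)
    -- build the witness vector
    set f : Fin n → L := Matrix.mulVec A⁻¹ (Pi.single s 1) with hf
    have hAf : Matrix.mulVec A f = Pi.single s 1 := by
      rw [hf, Matrix.mulVec_mulVec, Matrix.mul_nonsing_inv A (Ne.isUnit hdet),
        Matrix.one_mulVec]
    have hAfk : ∀ k : Fin n, ∑ j : Fin n, f j * (σ ^ ((k : ℕ) + (j : ℕ))) α
        = (Pi.single s 1 : Fin n → L) k := by
      intro k
      rw [← hAf]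
      simp [Matrix.mulVec, dotProduct, hA, mul_comm]
    have hmem : f ∈ VT σ α T := by
      intro k hk
      rw [hAfk k, Pi.single_apply, if_neg]
      rintro rfl; exact hs hk
    have := hle hmem s (Finset.mem_singleton_self s)
    rw [hAfk s] at this
    simp at this
  · intro hsT f hf k hk
    rw [Finset.mem_singleton] at hk
    subst hk
    exact hf k hsT
end

section
/- Let 2 ≤ δ ≤ n and r ∈ ℕ, and let C = { f : Fin n → L | ∀ i with 0 ≤ i ≤ δ−2, Σ_{j=0}^{n-1} f(j)·σ^{r+i+j}(α) = 0 } (a skew Reed–Solomon code of designed distance δ). Then every nonzero f ∈ C has Hamming weight (number of nonzero coordinates) at least δ. -/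
lemma artin_vanish {L : Type*} [Field L] (σ : L ≃+* L) :
    ∀ (w : ℕ) (β : Fin w → L), LinearIndependent (fixedSubfield σ) β →
      ∀ c : Fin w → L, (∀ i : ℕ, i < w → ∑ j, c j * (σ ^ i) (β j) = 0) →
        ∀ j, c j = 0 := by
  intro w
  induction w with
  | zero => exact fun β _ c _ j => j.elim0
  | succ w ih =>
    intro β hβ c hc
    have hβ' : LinearIndependent (fixedSubfield σ) (β ∘ Fin.castSucc) :=
      hβ.comp _ (Fin.castSucc_injective w)
    by_cases hcw : c (Fin.last w) = 0
    · have hc' : ∀ i : ℕ, i < w →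
          ∑ j : Fin w, (c ∘ Fin.castSucc) j * (σ ^ i) ((β ∘ Fin.castSucc) j) = 0 := by
        intro i hi
        have h := hc i (by omega)
        rw [Fin.sum_univ_castSucc] at h
        simpa [hcw] using h
      have h0 := ih (β ∘ Fin.castSucc) hβ' (c ∘ Fin.castSucc) hc'
      intro j
      exact Fin.lastCases hcw (fun j => h0 j) j
    · set cw := c (Fin.last w) with hcwdef
      -- linear independence of σ ∘ β ∘ castSucc
      have hγ : LinearIndependent (fixedSubfield σ)
          (fun j : Fin w => σ ((β ∘ Fin.castSucc) j)) := by
        rw [Fintype.linearIndependent_iff] at hβ' ⊢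
        intro g hg j
        refine hβ' g ?_ j
        apply σ.injective
        rw [map_sum, map_zero]
        rw [← hg]
        refine Finset.sum_congr rfl fun k _ => ?_
        show σ ((g k : L) * _) = (g k : L) * _
        rw [map_mul, (g k).2]
      -- the eliminated equations
      have key : ∀ j : Fin w,
          cw * σ (c (Fin.castSucc j)) - σ cw * c (Fin.castSucc j) = 0 := by
        refine ih _ hγ _ ?_
        intro i hi
        have E1 := hc i (by omega)
        have E2 := hc (i+1) (by omega)
        have E1' : ∑ j : Fin (w+1), σ (c j) * (σ ^ (i+1)) (β j) = 0 := by
          have := congrArg σ E1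
          rw [map_sum, map_zero] at this
          rw [← this]
          refine Finset.sum_congr rfl fun k _ => ?_
          rw [map_mul]
          congr 1
          rw [pow_succ']; rfl
        have E3 : ∑ j : Fin (w+1),
            (cw * σ (c j) - σ cw * c j) * (σ ^ (i+1)) (β j) = 0 := by
          have expand : ∑ j : Fin (w+1), (cw * σ (c j) - σ cw * c j) * (σ ^ (i+1)) (β j)
              = cw * (∑ j : Fin (w+1), σ (c j) * (σ ^ (i+1)) (β j))
                - σ cw * (∑ j : Fin (w+1), c j * (σ ^ (i+1)) (β j)) := by
            rw [Finset.mul_sum, Finset.mul_sum, ← Finset.sum_sub_distrib]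
            refine Finset.sum_congr rfl fun k _ => by ring
          have E2' : ∑ j : Fin (w+1), c j * (σ ^ (i+1)) (β j) = 0 := hc (i+1) (by omega)
          rw [expand, E1', E2', mul_zero, mul_zero, sub_zero]
        rw [Fin.sum_univ_castSucc] at E3
        have hlast : (cw * σ (c (Fin.last w)) - σ cw * c (Fin.last w))
            * (σ ^ (i+1)) (β (Fin.last w)) = 0 := by
          ring
        rw [hlast, add_zero] at E3
        rw [← E3]
        refine Finset.sum_congr rfl fun k _ => ?_
        congr 1
      have hσcw : σ cw ≠ 0 := fun h => hcw (σ.injective (by rw [h, map_zero]))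
      -- coefficients lie in the fixed field
      have hK : ∀ j : Fin (w+1), σ (c j / cw) = c j / cw := by
        refine Fin.lastCases ?_ ?_
        · rw [← hcwdef, div_self hcw, map_one]
        · intro j
          rw [map_div₀, div_eq_div_iff hσcw hcw]
          linear_combination key j
      set g : Fin (w+1) → fixedSubfield σ := fun j => ⟨c j / cw, hK j⟩ with hg
      have hsum : ∑ j, g j • β j = 0 := by
        have E0 := hc 0 (by omega)
        have : ∑ j : Fin (w+1), g j • β j = cw⁻¹ * ∑ j : Fin (w+1), c j * (σ ^ 0) (β j) := by
          rw [Finset.mul_sum]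
          refine Finset.sum_congr rfl fun k _ => ?_
          show (c k / cw) * β k = _
          rw [pow_zero]
          show (c k / cw) * β k = cw⁻¹ * (c k * β k)
          field_simp
        rw [this, E0, mul_zero]
      have hall := Fintype.linearIndependent_iff.mp hβ g hsum (Fin.last w)
      have : c (Fin.last w) / cw = 0 := congrArg Subtype.val hall
      rw [← hcwdef, div_self hcw] at this
      exact absurd this one_ne_zero

open Classical

/-- Let `α ∈ L` generate a normal basis of `L` over the fixed field `L^σ` of an
automorphism `σ` of order `n ≥ 1`, let `2 ≤ δ ≤ n`, `r ∈ ℕ`, and let `C` be the skew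
Reed–Solomon code of all `f : Fin n → L` with `∑ j, f j · σ^{r+i+j}(α) = 0` for all
`0 ≤ i ≤ δ − 2`. Then every nonzero `f ∈ C` has Hamming weight at least `δ`. -/
theorem skewRS_weight_lower_bound {L : Type*} [Field L] {n : ℕ} (hn : 1 ≤ n)
    (σ : L ≃+* L) (hord : orderOf σ = n) (α : L)
    (b : Module.Basis (Fin n) (fixedSubfield σ) L)
    (hb : ∀ i : Fin n, (b i : L) = (σ ^ (i : ℕ)) α)
    (δ : ℕ) (hδ2 : 2 ≤ δ) (hδn : δ ≤ n) (r : ℕ)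
    (f : Fin n → L)
    (hf : ∀ i : ℕ, i ≤ δ - 2 → ∑ j : Fin n, f j * (σ ^ (r + i + (j : ℕ))) α = 0)
    (hf0 : f ≠ 0) :
    δ ≤ (Finset.univ.filter fun j : Fin n => f j ≠ 0).card := by
  classical
  by_contra hcon
  push_neg at hcon
  set S := Finset.univ.filter fun j : Fin n => f j ≠ 0 with hS
  set w := S.card with hwdef
  have hwδ : w < δ := hcon
  have hnpos : 0 < n := hn
  let e : Fin w ≃ {x // x ∈ S} := S.equivFin.symm
  let g : Fin w → Fin n := fun k => ⟨(r + ((e k : Fin n) : ℕ)) % n, Nat.mod_lt _ hnpos⟩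
  have hginj : Function.Injective g := by
    intro k1 k2 h
    have h' : (r + ((e k1 : Fin n) : ℕ)) % n = (r + ((e k2 : Fin n) : ℕ)) % n :=
      congrArg Fin.val h
    have h2 : ((e k1 : Fin n) : ℕ) ≡ ((e k2 : Fin n) : ℕ) [MOD n] :=
      Nat.ModEq.add_left_cancel' r h'
    have h3 : ((e k1 : Fin n) : ℕ) = ((e k2 : Fin n) : ℕ) := by
      have := h2
      unfold Nat.ModEq at this
      rwa [Nat.mod_eq_of_lt (e k1 : Fin n).isLt, Nat.mod_eq_of_lt (e k2 : Fin n).isLt] at this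
    exact e.injective (Subtype.ext (Fin.ext h3))
  set β : Fin w → L := ⇑b ∘ g with hβ
  have hβli : LinearIndependent (fixedSubfield σ) β := b.linearIndependent.comp g hginj
  have hβval : ∀ k : Fin w, β k = (σ ^ (r + ((e k : Fin n) : ℕ))) α := by
    intro k
    show (b (g k) : L) = _
    rw [hb]
    show (σ ^ ((r + ((e k : Fin n) : ℕ)) % n)) α = _
    rw [show (r + ((e k : Fin n) : ℕ)) % n = (r + ((e k : Fin n) : ℕ)) % orderOf σ by
      rw [hord]]
    rw [pow_mod_orderOf]
  set c : Fin w → L := fun k => f (e k : Fin n) with hcdef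
  have hc : ∀ i : ℕ, i < w → ∑ k : Fin w, c k * (σ ^ i) (β k) = 0 := by
    intro i hi
    have hfi := hf i (by omega)
    calc ∑ k : Fin w, c k * (σ ^ i) (β k)
        = ∑ k : Fin w, f (e k : Fin n) * (σ ^ (r + i + ((e k : Fin n) : ℕ))) α := by
          refine Finset.sum_congr rfl fun k _ => ?_
          rw [hβval]
          congr 1
          have hidx : r + i + ((e k : Fin n) : ℕ) = i + (r + ((e k : Fin n) : ℕ)) := by ring
          rw [hidx, pow_add σ i (r + ((e k : Fin n) : ℕ))]
          rfl
      _ = ∑ x : {x // x ∈ S}, f (x : Fin n) * (σ ^ (r + i + ((x : Fin n) : ℕ))) α :=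
          Equiv.sum_comp e
            (fun x : {x // x ∈ S} => f (x : Fin n) * (σ ^ (r + i + ((x : Fin n) : ℕ))) α)
      _ = ∑ j ∈ S, f j * (σ ^ (r + i + (j : ℕ))) α :=
          S.sum_coe_sort (fun j => f j * (σ ^ (r + i + (j : ℕ))) α)
      _ = ∑ j : Fin n, f j * (σ ^ (r + i + (j : ℕ))) α := by
          rw [hS]
          refine Finset.sum_filter_of_ne fun x _ hx h0 => hx ?_
          rw [h0, zero_mul]
      _ = 0 := hfi
  have hzero := artin_vanish σ w β hβli c hc
  apply hf0
  funext j
  show f j = 0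
  by_cases hj : f j = 0
  · exact hj
  · have hjS : j ∈ S := by simp [hS, hj]
    have h1 := hzero (e.symm ⟨j, hjS⟩)
    rw [hcdef] at h1
    simpa using h1
end

section
/- Let 2 ≤ δ ≤ n and r ∈ ℕ, and let C = { f : Fin n → L | ∀ i with 0 ≤ i ≤ δ−2, Σ_{j=0}^{n-1} f(j)·σ^{r+i+j}(α) = 0 }. Then C has L-dimension n − δ + 1, and the minimum Hamming weight over all nonzero elements of C equals δ; in particular C is an MDS code (its minimum distance attains the Singleton bound d = n − dim C + 1). -/
open Classical

/-- The skew Reed–Solomon code of designed distance `δ` (with offset `r`): all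
`f : Fin n → L` with `∑ j, f j · σ^{r+i+j}(α) = 0` for every `0 ≤ i ≤ δ − 2`. -/
def skewRSCode {L : Type*} [Field L] (n : ℕ) (σ : L ≃+* L) (α : L) (r δ : ℕ) :
    Submodule L (Fin n → L) where
  carrier := {f | ∀ i : ℕ, i ≤ δ - 2 → ∑ j : Fin n, f j * (σ ^ (r + i + (j : ℕ))) α = 0}
  add_mem' := by
    intro f g hf hg i hi
    simp only [Pi.add_apply, add_mul, Finset.sum_add_distrib]
    rw [hf i hi, hg i hi, add_zero]
  zero_mem' := by intro i hi; simp
  smul_mem' := by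
    intro c f hf i hi
    simp only [Pi.smul_apply, smul_eq_mul, mul_assoc]
    rw [← Finset.mul_sum, hf i hi, mul_zero]

lemma pow_apply_add {L : Type*} [Field L] (σ : L ≃+* L) (a b : ℕ) (x : L) :
    (σ ^ (a + b)) x = (σ ^ a) ((σ ^ b) x) := by rw [pow_add]; rfl

lemma pow_apply_zero {L : Type*} [Field L] (σ : L ≃+* L) (x : L) : (σ ^ (0 : ℕ)) x = x := rfl

lemma pow_apply_succ {L : Type*} [Field L] (σ : L ≃+* L) (k : ℕ) (x : L) :
    (σ ^ (k + 1)) x = σ ((σ ^ k) x) := by rw [add_comm, pow_add, pow_one]; rfl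

lemma pow_apply_mod {L : Type*} [Field L] (σ : L ≃+* L) {n : ℕ}
    (hord : orderOf σ = n) (k : ℕ) (x : L) : (σ ^ k) x = (σ ^ (k % n)) x := by
  subst hord
  rw [pow_mod_orderOf]

/-- Moore-matrix kernel triviality: if `β` is linearly independent over the fixed
field of `σ`, then the system `∑ⱼ cⱼ σ^i(βⱼ) = 0` (for `i = 0, …, m − 1`) has only
the trivial solution. -/
lemma moore {L : Type*} [Field L] (σ : L ≃+* L) :
    ∀ (m : ℕ) (β : Fin m → L), LinearIndependent (fixedSubfield σ) β →
      ∀ c : Fin m → L, (∀ i : Fin m, ∑ j, c j * (σ ^ (i : ℕ)) (β j) = 0) → ∀ j, c j = 0 := by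
  intro m
  induction m with
  | zero => intro β _ c _ j; exact absurd j.2 (by omega)
  | succ m ih =>
    intro β hβ c heq
    by_cases h0 : c (Fin.last m) = 0
    · have hind : ∀ j : Fin m, c (Fin.castSucc j) = 0 := by
        apply ih (β ∘ Fin.castSucc) (hβ.comp _ (Fin.castSucc_injective m))
        intro i
        have := heq (Fin.castSucc i)
        rw [Fin.sum_univ_castSucc] at this
        simpa [h0] using this
      intro j
      refine Fin.lastCases h0 hind j
    · exfalso
      set cm := c (Fin.last m) with hcm
      set e : Fin (m + 1) → L := fun j => cm * σ (c j) - σ cm * c j with he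
      have helast : e (Fin.last m) = 0 := by
        show cm * σ (c (Fin.last m)) - σ cm * c (Fin.last m) = 0
        rw [← hcm]; ring
      have heqe : ∀ i : Fin m, ∑ j, e j * (σ ^ ((i : ℕ) + 1)) (β j) = 0 := by
        intro i
        have h1 := heq (Fin.castSucc i)
        have h2 := heq (i.succ)
        have h1' : ∑ j, σ (c j) * (σ ^ ((i : ℕ) + 1)) (β j) = 0 := by
          have := congrArg σ h1
          rw [map_sum] at this
          simpa only [map_mul, map_zero, ← pow_apply_succ, Fin.val_castSucc] using this
        have h2' : ∑ j, c j * (σ ^ ((i : ℕ) + 1)) (β j) = 0 := by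
          simpa [Fin.val_succ] using h2
        calc ∑ j, e j * (σ ^ ((i : ℕ) + 1)) (β j)
            = cm * ∑ j, σ (c j) * (σ ^ ((i : ℕ) + 1)) (β j)
              - σ cm * ∑ j, c j * (σ ^ ((i : ℕ) + 1)) (β j) := by
              rw [Finset.mul_sum, Finset.mul_sum, ← Finset.sum_sub_distrib]
              congr 1; ext j; simp only [he]; ring
          _ = 0 := by rw [h1', h2']; ring
      have hind : ∀ j : Fin m, σ.symm (e (Fin.castSucc j)) = 0 := by
        apply ih (β ∘ Fin.castSucc) (hβ.comp _ (Fin.castSucc_injective m))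
        intro i
        have key : ∀ j : Fin (m + 1), σ.symm (e j) * (σ ^ (i : ℕ)) (β j)
            = σ.symm (e j * (σ ^ ((i : ℕ) + 1)) (β j)) := by
          intro j
          rw [map_mul]
          congr 1
          rw [pow_apply_succ, RingEquiv.symm_apply_apply]
        have hpre := heqe i
        calc ∑ j : Fin m, σ.symm (e (Fin.castSucc j)) * (σ ^ (i : ℕ)) ((β ∘ Fin.castSucc) j)
            = ∑ j : Fin m,
                σ.symm (e (Fin.castSucc j) * (σ ^ ((i : ℕ) + 1)) (β (Fin.castSucc j))) :=
              Finset.sum_congr rfl fun j _ => key _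
          _ = σ.symm (∑ j : Fin m,
                e (Fin.castSucc j) * (σ ^ ((i : ℕ) + 1)) (β (Fin.castSucc j))) := by
              rw [map_sum]
          _ = 0 := by
              rw [Fin.sum_univ_castSucc] at hpre
              rw [show (∑ j : Fin m,
                  e (Fin.castSucc j) * (σ ^ ((i : ℕ) + 1)) (β (Fin.castSucc j))) = 0 by
                simpa [helast] using hpre]
              simp
      have hezero : ∀ j : Fin (m + 1), e j = 0 := by
        intro j
        refine Fin.lastCases helast ?_ j
        intro j
        have := hind j
        rwa [map_eq_zero_iff _ σ.symm.injective] at this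
      have hσcm : σ cm ≠ 0 := by
        intro h
        exact h0 (σ.injective (h.trans (map_zero σ).symm))
      have hd : ∀ j, σ (c j / cm) = c j / cm := by
        intro j
        have hj := hezero j
        rw [he] at hj
        simp only [sub_eq_zero] at hj
        rw [map_div₀, div_eq_div_iff hσcm h0]
        linear_combination hj
      set d : Fin (m + 1) → fixedSubfield σ := fun j => ⟨c j / cm, hd j⟩ with hdd
      have hsum : ∑ j, d j • β j = 0 := by
        have h0' := heq 0
        simp only [Fin.val_zero, pow_apply_zero] at h0'
        have hs : ∑ j, (c j / cm) * β j = 0 := by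
          rw [show (∑ j, (c j / cm) * β j) = (∑ j, c j * β j) / cm by
            rw [Finset.sum_div]; congr 1; ext j; rw [div_mul_eq_mul_div]]
          rw [h0', zero_div]
        calc ∑ j, d j • β j = ∑ j, (c j / cm) * β j := rfl
          _ = 0 := hs
      have hlast := Fintype.linearIndependent_iff.mp hβ d hsum (Fin.last m)
      rw [Subtype.ext_iff] at hlast
      simp only [hdd] at hlast
      rcases div_eq_zero_iff.mp hlast with h | h
      · exact h0 h
      · exact h0 h

/-- Skew powers of a normal-basis generator along an injective index map are
linearly independent over the fixed field. -/
lemma li_skew {L : Type*} [Field L] {n : ℕ} (hn : 1 ≤ n) (σ : L ≃+* L)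
    (hord : orderOf σ = n) (α : L) (b : Module.Basis (Fin n) (fixedSubfield σ) L)
    (hb : ∀ i : Fin n, (b i : L) = (σ ^ (i : ℕ)) α) (r : ℕ)
    {s : ℕ} (u : Fin s → Fin n) (hu : Function.Injective u) :
    LinearIndependent (fixedSubfield σ) (fun j => (σ ^ (r + (u j : ℕ))) α) := by
  have hnpos : 0 < n := hn
  set v : Fin s → Fin n := fun j => ⟨(r + (u j : ℕ)) % n, Nat.mod_lt _ hnpos⟩ with hv
  have hvinj : Function.Injective v := by
    intro j1 j2 h
    apply hu
    have h' : (r + (u j1 : ℕ)) % n = (r + (u j2 : ℕ)) % n := congrArg Fin.val h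
    have hmodeq : (u j1 : ℕ) % n = (u j2 : ℕ) % n := Nat.ModEq.add_left_cancel' r h'
    rw [Nat.mod_eq_of_lt (u j1).2, Nat.mod_eq_of_lt (u j2).2] at hmodeq
    exact Fin.val_injective hmodeq
  have hfun : (fun j => (σ ^ (r + (u j : ℕ))) α) = (fun i => (b i : L)) ∘ v := by
    funext j
    rw [Function.comp_apply, hb (v j)]
    exact pow_apply_mod σ hord _ α
  rw [hfun]
  exact b.linearIndependent.comp v hvinj

/-- The parity-check map with `m` rows. -/
def chkMap {L : Type*} [Field L] (n m : ℕ) (σ : L ≃+* L) (α : L) (r : ℕ) :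
    (Fin n → L) →ₗ[L] (Fin m → L) where
  toFun f := fun i => ∑ j, f j * (σ ^ (r + (i : ℕ) + (j : ℕ))) α
  map_add' f g := by
    funext i
    simp only [Pi.add_apply, add_mul, Finset.sum_add_distrib]
  map_smul' c f := by
    funext i
    simp only [Pi.smul_apply, smul_eq_mul, RingHom.id_apply, mul_assoc, ← Finset.mul_sum]

lemma sum_extend {L : Type*} [Field L] {m n : ℕ} (h : m ≤ n) (g : Fin m → L) (A : Fin n → L) :
    ∑ j : Fin n, (if hj : (j : ℕ) < m then g ⟨j, hj⟩ else 0) * A j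
      = ∑ j : Fin m, g j * A (Fin.castLE h j) := by
  rw [← Finset.sum_subset (Finset.subset_univ ((Finset.univ).map (Fin.castLEEmb h)))
      (fun x _ hx => by
        rw [dif_neg, zero_mul]
        intro hlt
        exact hx (Finset.mem_map.mpr ⟨⟨(x : ℕ), hlt⟩, Finset.mem_univ _, by ext; simp⟩))]
  rw [Finset.sum_map]
  refine Finset.sum_congr rfl fun j _ => ?_
  have hj : ((Fin.castLEEmb h) j : ℕ) < m := by simpa using j.2
  rw [dif_pos hj]
  congr 1

/-- Let `α ∈ L` generate a normal basis of `L` over the fixed field `L^σ` of an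
automorphism `σ` of order `n ≥ 1`, and let `2 ≤ δ ≤ n`, `r ∈ ℕ`. Then the skew RS code
`C` of designed distance `δ` has `L`-dimension `n − δ + 1`, its minimum Hamming weight
over nonzero codewords equals `δ`, and it is MDS: `δ = n − dim C + 1`. -/
theorem skewRS_MDS {L : Type*} [Field L] {n : ℕ} (hn : 1 ≤ n)
    (σ : L ≃+* L) (hord : orderOf σ = n) (α : L)
    (b : Module.Basis (Fin n) (fixedSubfield σ) L)
    (hb : ∀ i : Fin n, (b i : L) = (σ ^ (i : ℕ)) α)
    (δ : ℕ) (hδ2 : 2 ≤ δ) (hδn : δ ≤ n) (r : ℕ) :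
    Module.finrank L ↥(skewRSCode n σ α r δ) = n - δ + 1 ∧
    IsLeast {w : ℕ | ∃ f ∈ skewRSCode n σ α r δ, f ≠ 0 ∧
      w = (Finset.univ.filter fun j : Fin n => f j ≠ 0).card} δ ∧
    δ = n - Module.finrank L ↥(skewRSCode n σ α r δ) + 1 := by
  have hle : δ - 1 ≤ n := by omega
  have hexp : ∀ (i j : ℕ), (σ ^ i) ((σ ^ (r + j)) α) = (σ ^ (r + i + j)) α := by
    intro i j
    rw [← pow_apply_add σ i (r + j), show i + (r + j) = r + i + j from by omega]
  -- the code is the kernel of the parity-check map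
  have hker : skewRSCode n σ α r δ = LinearMap.ker (chkMap n (δ - 1) σ α r) := by
    ext f
    constructor
    · intro hf
      rw [LinearMap.mem_ker]
      funext i
      exact hf (i : ℕ) (by omega)
    · intro hf i hi
      have := congrFun (LinearMap.mem_ker.mp hf) ⟨i, by omega⟩
      simpa [chkMap] using this
  -- the square check map is injective, hence surjective
  have hTinj : Function.Injective (chkMap (δ - 1) (δ - 1) σ α r) := by
    rw [← LinearMap.ker_eq_bot]
    rw [Submodule.eq_bot_iff]
    intro g hg
    funext j
    have hβ := li_skew hn σ hord α b hb r (Fin.castLE hle) (Fin.castLE_injective hle)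
    refine moore σ (δ - 1) _ hβ g ?_ j
    intro i
    have := congrFun (LinearMap.mem_ker.mp hg) i
    simp only [chkMap, LinearMap.coe_mk, AddHom.coe_mk, Pi.zero_apply] at this
    calc ∑ j, g j * (σ ^ (i : ℕ)) ((σ ^ (r + ((Fin.castLE hle j) : ℕ))) α)
        = ∑ j, g j * (σ ^ (r + (i : ℕ) + ((j : Fin (δ - 1)) : ℕ))) α := by
          refine Finset.sum_congr rfl fun j _ => ?_
          rw [hexp (i : ℕ) ((Fin.castLE hle j) : ℕ)]
          simp
      _ = 0 := this
  have hTsurj : Function.Surjective (chkMap (δ - 1) (δ - 1) σ α r) :=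
    LinearMap.injective_iff_surjective.mp hTinj
  -- full check map is surjective
  have hsurj : Function.Surjective (chkMap n (δ - 1) σ α r) := by
    intro t
    obtain ⟨g, hg⟩ := hTsurj t
    refine ⟨fun j => if hj : (j : ℕ) < δ - 1 then g ⟨j, hj⟩ else 0, ?_⟩
    funext i
    show (∑ j : Fin n, _ * (σ ^ (r + (i : ℕ) + (j : ℕ))) α) = t i
    rw [sum_extend hle g (fun j => (σ ^ (r + (i : ℕ) + (j : ℕ))) α)]
    have := congrFun hg i
    simpa [chkMap] using this
  -- dimension
  have hdim : Module.finrank L ↥(skewRSCode n σ α r δ) = n - δ + 1 := by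
    rw [hker]
    have h1 := LinearMap.finrank_range_add_finrank_ker (chkMap n (δ - 1) σ α r)
    rw [LinearMap.range_eq_top.mpr hsurj, finrank_top] at h1
    simp only [Module.finrank_pi, Fintype.card_fin] at h1
    omega
  -- weight lower bound
  have hlb : ∀ f ∈ skewRSCode n σ α r δ, f ≠ 0 →
      δ ≤ (Finset.univ.filter fun j : Fin n => f j ≠ 0).card := by
    intro f hf hne
    by_contra hlt
    push_neg at hlt
    set S := Finset.univ.filter fun j : Fin n => f j ≠ 0 with hS
    set s := S.card with hs
    have hsδ : s ≤ δ - 1 := by omega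
    have e : Fin s ≃o ↥S := S.orderIsoOfFin rfl
    set u : Fin s → Fin n := fun j => ((e j : ↥S) : Fin n) with hu
    have huinj : Function.Injective u := by
      intro a b hab
      exact e.injective (Subtype.ext hab)
    have hβ := li_skew hn σ hord α b hb r u huinj
    have heq : ∀ i : Fin s, ∑ j, f (u j) * (σ ^ (i : ℕ)) ((σ ^ (r + (u j : ℕ))) α) = 0 := by
      intro i
      have hiδ : (i : ℕ) ≤ δ - 2 := by have := i.2; omega
      have hmem := hf (i : ℕ) hiδ
      have hsum0 : ∑ x ∈ S, f x * (σ ^ (r + (i : ℕ) + (x : ℕ))) α = 0 := by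
        rw [Finset.sum_subset (Finset.subset_univ S) (fun x _ hx => by
          have hfx : f x = 0 := by
            by_contra hfx
            exact hx (Finset.mem_filter.mpr ⟨Finset.mem_univ _, hfx⟩)
          rw [hfx, zero_mul])]
        exact hmem
      calc ∑ j : Fin s, f (u j) * (σ ^ (i : ℕ)) ((σ ^ (r + (u j : ℕ))) α)
          = ∑ j : Fin s, f (u j) * (σ ^ (r + (i : ℕ) + (u j : ℕ))) α := by
            refine Finset.sum_congr rfl fun j _ => ?_
            rw [hexp]
        _ = ∑ x : ↥S, f (x : Fin n) * (σ ^ (r + (i : ℕ) + ((x : Fin n) : ℕ))) α :=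
            Fintype.sum_equiv e.toEquiv _ _ (fun j => rfl)
        _ = ∑ x ∈ S, f x * (σ ^ (r + (i : ℕ) + (x : ℕ))) α :=
            Finset.sum_coe_sort S (fun x => f x * (σ ^ (r + (i : ℕ) + (x : ℕ))) α)
        _ = 0 := hsum0
    have hz := moore σ s _ hβ (fun j => f (u j)) heq
    obtain ⟨j0, hj0⟩ := Function.ne_iff.mp hne
    have hj0S : j0 ∈ S := Finset.mem_filter.mpr ⟨Finset.mem_univ _, by simpa using hj0⟩
    have := hz (e.symm ⟨j0, hj0S⟩)
    simp only [hu, e.apply_symm_apply] at this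
    exact hj0 (by simpa using this)
  -- existence of a codeword of weight exactly δ
  have hnotinj : ¬ Function.Injective (chkMap δ (δ - 1) σ α r) := by
    intro hinj
    have := LinearMap.finrank_le_finrank_of_injective hinj
    simp only [Module.finrank_pi, Fintype.card_fin] at this
    omega
  have hkerne : LinearMap.ker (chkMap δ (δ - 1) σ α r) ≠ ⊥ := by
    intro h
    exact hnotinj (LinearMap.ker_eq_bot.mp h)
  obtain ⟨g, hgker, hgne⟩ := Submodule.exists_mem_ne_zero_of_ne_bot hkerne
  set f : Fin n → L := fun j => if hj : (j : ℕ) < δ then g ⟨j, hj⟩ else 0 with hfdef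
  have hfmem : f ∈ skewRSCode n σ α r δ := by
    intro i hi
    have hi' : i < δ - 1 := by omega
    have hgi := congrFun (LinearMap.mem_ker.mp hgker) ⟨i, hi'⟩
    simp only [chkMap, LinearMap.coe_mk, AddHom.coe_mk, Pi.zero_apply] at hgi
    calc ∑ j : Fin n, f j * (σ ^ (r + i + (j : ℕ))) α
        = ∑ j : Fin δ, g j * (σ ^ (r + i + ((Fin.castLE hδn j) : ℕ))) α :=
          sum_extend hδn g (fun j => (σ ^ (r + i + (j : ℕ))) α)
      _ = 0 := by simpa using hgi
  have hcast : ∀ j0 : Fin δ, f (Fin.castLE hδn j0) = g j0 := by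
    intro j0
    show (if hj : ((Fin.castLE hδn j0) : ℕ) < δ then g ⟨_, hj⟩ else 0) = g j0
    rw [dif_pos (by simpa using j0.2)]
    congr 1
  have hfne : f ≠ 0 := by
    intro h
    obtain ⟨j0, hj0⟩ := Function.ne_iff.mp hgne
    apply hj0
    have := congrFun h (Fin.castLE hδn j0)
    rwa [hcast j0] at this
  have hwle : (Finset.univ.filter fun j : Fin n => f j ≠ 0).card ≤ δ := by
    have hsub : (Finset.univ.filter fun j : Fin n => f j ≠ 0)
        ⊆ Finset.univ.map (Fin.castLEEmb hδn) := by
      intro x hx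
      by_contra hxm
      apply (Finset.mem_filter.mp hx).2
      show (if hj : (x : ℕ) < δ then g ⟨x, hj⟩ else 0) = 0
      rw [dif_neg]
      intro hltx
      exact hxm (Finset.mem_map.mpr ⟨⟨(x : ℕ), hltx⟩, Finset.mem_univ _, by ext; simp⟩)
    calc (Finset.univ.filter fun j : Fin n => f j ≠ 0).card
        ≤ (Finset.univ.map (Fin.castLEEmb hδn)).card := Finset.card_le_card hsub
      _ = δ := by simp
  have hw : (Finset.univ.filter fun j : Fin n => f j ≠ 0).card = δ :=
    le_antisymm hwle (hlb f hfmem hfne)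
  refine ⟨hdim, ⟨⟨f, hfmem, hfne, hw.symm⟩, ?_⟩, by omega⟩
  rintro w ⟨f', hf', hne', rfl⟩
  exact hlb f' hf' hne'
end

section
/- Let k : Fin ν → Fin n be injective (with ν ≤ n) and let e : Fin ν → L. Then the ν × ν matrix M over L with entries M(j,i) = σ^{k(j)+i}(α) (j, i ∈ Fin ν) is invertible; consequently, setting s_i = Σ_{j} e(j)·σ^{k(j)+i}(α) for i ∈ Fin ν, the vector e is the unique x : Fin ν → L satisfying Σ_{j} x(j)·σ^{k(j)+i}(α) = s_i for all i ∈ Fin ν. -/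
private lemma pow_apply_symm {L : Type*} [Field L] (σ : L ≃+* L) (i : ℕ) (x : L) :
    σ.symm ((σ ^ (i + 1)) x) = (σ ^ i) x := by
  rw [pow_succ']
  exact σ.symm_apply_apply _

/-- Rows of a Moore-type matrix built from `K`-linearly independent elements are
`L`-linearly independent (here stated as: only the trivial relation holds). -/
private lemma moore_rows {L : Type*} [Field L] (σ : L ≃+* L) :
    ∀ ν (β : Fin ν → L), LinearIndependent (fixedSubfield σ) β →
      ∀ c : Fin ν → L,
        (∀ i : Fin ν, ∑ j, c j * (σ ^ (i : ℕ)) (β j) = 0) → c = 0 := by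
  intro ν
  induction ν with
  | zero => intro β _ c _; ext j; exact j.elim0
  | succ ν ih =>
    intro β hβ c hc
    by_contra hne
    obtain ⟨j0, hj0⟩ : ∃ j, c j ≠ 0 := by
      by_contra h; push_neg at h; exact hne (funext h)
    set c' : Fin (ν + 1) → L := fun j => c j * (c j0)⁻¹ with hc'def
    have hc'eq : ∀ i : Fin (ν + 1), ∑ j, c' j * (σ ^ (i : ℕ)) (β j) = 0 := by
      intro i
      have : ∑ j, c' j * (σ ^ (i : ℕ)) (β j)
          = (∑ j, c j * (σ ^ (i : ℕ)) (β j)) * (c j0)⁻¹ := by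
        rw [Finset.sum_mul]; apply Finset.sum_congr rfl; intro j _; ring
      rw [this, hc i, zero_mul]
    have hc'j0 : c' j0 = 1 := by
      simp only [hc'def]; exact mul_inv_cancel₀ hj0
    clear_value c'
    set ρ : Fin (ν + 1) → L := fun j => c' j - σ.symm (c' j) with hρdef
    have hρj0 : ρ j0 = 0 := by
      simp only [hρdef, hc'j0, map_one, sub_self]
    have hρeq : ∀ i : Fin ν, ∑ j, ρ j * (σ ^ (i : ℕ)) (β j) = 0 := by
      intro i
      have h1 : ∑ j, c' j * (σ ^ (i : ℕ)) (β j) = 0 := by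
        have := hc'eq i.castSucc
        simpa using this
      have h2 : ∑ j, σ.symm (c' j) * (σ ^ (i : ℕ)) (β j) = 0 := by
        have h3 := hc'eq i.succ
        have h4 : σ.symm (∑ j, c' j * (σ ^ ((i : ℕ) + 1)) (β j)) = 0 := by
          rw [show ((i : ℕ) + 1) = ((i.succ : Fin (ν+1)) : ℕ) by simp, h3, map_zero]
        rw [map_sum] at h4
        calc ∑ j, σ.symm (c' j) * (σ ^ (i : ℕ)) (β j)
            = ∑ j, σ.symm (c' j * (σ ^ ((i : ℕ) + 1)) (β j)) := by
              apply Finset.sum_congr rfl; intro j _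
              rw [map_mul, pow_apply_symm]
          _ = 0 := h4
      calc ∑ j, ρ j * (σ ^ (i : ℕ)) (β j)
          = ∑ j, (c' j * (σ ^ (i : ℕ)) (β j) - σ.symm (c' j) * (σ ^ (i : ℕ)) (β j)) := by
            apply Finset.sum_congr rfl; intro j _; simp only [hρdef]; ring
        _ = 0 := by rw [Finset.sum_sub_distrib, h1, h2, sub_zero]
    have hβ' : LinearIndependent (fixedSubfield σ) (β ∘ j0.succAbove) :=
      hβ.comp _ (Fin.succAbove_right_injective)
    have hρ' : (ρ ∘ j0.succAbove) = 0 := by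
      apply ih (β ∘ j0.succAbove) hβ'
      intro i
      have := hρeq i
      rw [Fin.sum_univ_succAbove (fun j => ρ j * (σ ^ (i : ℕ)) (β j)) j0, hρj0,
        zero_mul, zero_add] at this
      exact this
    have hρ0 : ∀ j, ρ j = 0 := by
      intro j
      rcases eq_or_ne j j0 with rfl | hj
      · exact hρj0
      · obtain ⟨j', rfl⟩ := Fin.exists_succAbove_eq hj
        exact congrFun hρ' j'
    have hmem : ∀ j, c' j ∈ fixedSubfield σ := by
      intro j
      have h := hρ0 j
      simp only [hρdef, sub_eq_zero] at h
      show σ (c' j) = c' j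
      conv_lhs => rw [h]
      exact σ.apply_symm_apply _
    have hall := Fintype.linearIndependent_iff.mp hβ
      (fun j => (⟨c' j, hmem j⟩ : fixedSubfield σ))
    have hsum : ∑ j, (⟨c' j, hmem j⟩ : fixedSubfield σ) • β j = 0 := by
      calc ∑ j, (⟨c' j, hmem j⟩ : fixedSubfield σ) • β j
          = ∑ j, c' j * (σ ^ (((0 : Fin (ν + 1)) : ℕ))) (β j) := by
            apply Finset.sum_congr rfl; intro j _
            rw [Fin.val_zero, pow_zero]
            rfl
        _ = 0 := hc'eq 0
    have := hall hsum j0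
    rw [Subtype.ext_iff] at this
    simp only [hc'j0] at this
    exact one_ne_zero this

/-- Let `α ∈ L` generate a normal basis of `L` over the fixed field `L^σ` of an
automorphism `σ` of order `n ≥ 1`. Let `k : Fin ν → Fin n` be injective (`ν ≤ n`) and
`e : Fin ν → L`. Then the `ν × ν` matrix with entries `σ^{k(j)+i}(α)` is invertible, and
`e` is the unique solution `x` of the syndrome equations
`∑ j, x j · σ^{k(j)+i}(α) = s_i := ∑ j, e j · σ^{k(j)+i}(α)`. -/
theorem error_values_unique {L : Type*} [Field L] {n : ℕ} (hn : 1 ≤ n)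
    (σ : L ≃+* L) (hord : orderOf σ = n) (α : L)
    (b : Module.Basis (Fin n) (fixedSubfield σ) L)
    (hb : ∀ i : Fin n, (b i : L) = (σ ^ (i : ℕ)) α)
    (ν : ℕ) (hν : ν ≤ n) (k : Fin ν → Fin n) (hk : Function.Injective k)
    (e : Fin ν → L) :
    IsUnit (Matrix.of fun j i : Fin ν => (σ ^ ((k j : ℕ) + (i : ℕ))) α) ∧
    ∀ x : Fin ν → L,
      (∀ i : Fin ν, ∑ j : Fin ν, x j * (σ ^ ((k j : ℕ) + (i : ℕ))) α =
        ∑ j : Fin ν, e j * (σ ^ ((k j : ℕ) + (i : ℕ))) α) ↔ x = e := by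
  set β : Fin ν → L := fun j => (σ ^ (k j : ℕ)) α with hβdef
  have hβb : β = (fun i : Fin n => (b i : L)) ∘ k := by
    funext j; rw [hβdef]; exact (hb (k j)).symm
  have hβ : LinearIndependent (fixedSubfield σ) β := by
    rw [hβb]
    exact b.linearIndependent.comp k hk
  have key : ∀ (j i : Fin ν), (σ ^ ((k j : ℕ) + (i : ℕ))) α = (σ ^ (i : ℕ)) (β j) := by
    intro j i
    rw [hβdef, add_comm, pow_add]
    rfl
  constructor
  · rw [Matrix.isUnit_iff_isUnit_det, isUnit_iff_ne_zero]
    intro hdet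
    obtain ⟨v, hv, hveq⟩ := (Matrix.exists_vecMul_eq_zero_iff).mpr hdet
    apply hv
    apply moore_rows σ ν β hβ
    intro i
    have := congrFun hveq i
    simp only [Matrix.vecMul, dotProduct, Matrix.of_apply, Pi.zero_apply] at this
    calc ∑ j, v j * (σ ^ (i : ℕ)) (β j)
        = ∑ j, v j * (σ ^ ((k j : ℕ) + (i : ℕ))) α := by
          apply Finset.sum_congr rfl; intro j _; rw [key]
      _ = 0 := this
  · intro x
    constructor
    · intro hx
      have hsub : x - e = 0 := by
        apply moore_rows σ ν β hβ
        intro i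
        calc ∑ j, (x - e) j * (σ ^ (i : ℕ)) (β j)
            = (∑ j, x j * (σ ^ ((k j : ℕ) + (i : ℕ))) α)
              - ∑ j, e j * (σ ^ ((k j : ℕ) + (i : ℕ))) α := by
              rw [← Finset.sum_sub_distrib]
              apply Finset.sum_congr rfl; intro j _
              rw [key]; simp [sub_mul]
          _ = 0 := by rw [hx i, sub_self]
      funext j
      have := congrFun hsub j
      simpa [sub_eq_zero] using this
    · rintro rfl
      intro i; rfl
end

section
/- Let k : Fin ν → Fin n be injective, e : Fin ν → L, and let t be a natural number with ν ≤ t and t + 1 ≤ n. Let Σ be the n × ν matrix with entries Σ(i,j) = σ^{k(j)+i}(α) (i ∈ Fin n, j ∈ Fin ν), let Σ^t be its submatrix consisting of the first t+1 rows, and for r ≤ t let E^r be the ν × r matrix with entries E^r(i,j) = (σ⁻¹)^j(e(i)). Then rank(Σ·E^r) = rank(E^r) = rank(Σ^t·E^r). -/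
section Aux

variable {L : Type*} [Field L]

/-- `σ` as a linear equivalence over its fixed field. -/
def sigmaLinear (σ : L ≃+* L) : L ≃ₗ[fixedSubfield σ] L where
  toFun := σ
  invFun := σ.symm
  left_inv := σ.left_inv
  right_inv := σ.right_inv
  map_add' := map_add σ
  map_smul' := by
    intro a x
    show σ ((a : L) * x) = (a : L) * σ x
    rw [map_mul, a.2]

theorem pow_succ_apply (σ : L ≃+* L) (i : ℕ) (y : L) :
    (σ ^ (i + 1)) y = σ ((σ ^ i) y) := by
  rw [pow_succ']; rfl

theorem pow_succ_apply' (σ : L ≃+* L) (i : ℕ) (y : L) :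
    (σ ^ (i + 1)) y = (σ ^ i) (σ y) := by
  rw [pow_succ]; rfl

/-- Moore-matrix lemma: if `x` is a linearly independent family over the fixed field of `σ`
with `card ι ≤ m`, then the columns `(σ^i (x j))_{i < m}` are linearly independent over `L`. -/
theorem moore_li (σ : L ≃+* L) :
    ∀ (m : ℕ) (ι : Type) [Fintype ι] (x : ι → L),
      Fintype.card ι ≤ m → LinearIndependent (fixedSubfield σ) x →
      LinearIndependent L (fun j : ι => fun i : Fin m => (σ ^ (i : ℕ)) (x j)) := by
  intro m
  induction m with
  | zero =>
    intro ι _ x hcard _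
    have : IsEmpty ι := Fintype.card_eq_zero_iff.mp (Nat.le_zero.mp hcard)
    exact linearIndependent_empty_type
  | succ m ih =>
    intro ι _ x hcard hx
    classical
    rw [Fintype.linearIndependent_iff]
    intro c hc j1
    by_contra h0
    set γ : L := (c j1)⁻¹ with hγ
    set c' : ι → L := fun j => γ * c j with hc'def
    have hc'j1 : c' j1 = 1 := inv_mul_cancel₀ h0
    have hA : ∀ i : Fin (m + 1), ∑ j, c' j * (σ ^ (i : ℕ)) (x j) = 0 := by
      intro i
      have hpt := congrFun hc i
      simp only [Finset.sum_apply, Pi.smul_apply, smul_eq_mul, Pi.zero_apply] at hpt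
      calc ∑ j, c' j * (σ ^ (i : ℕ)) (x j)
          = γ * ∑ j, c j * (σ ^ (i : ℕ)) (x j) := by
            rw [Finset.mul_sum]
            refine Finset.sum_congr rfl fun j _ => ?_
            simp only [hc'def]
            ring
        _ = 0 := by rw [hpt, mul_zero]
    set d : ι → L := fun j => σ (c' j) - c' j with hddef
    have hdj1 : d j1 = 0 := by
      simp only [hddef, hc'j1, map_one, sub_self]
    have hB : ∀ i : ℕ, i + 1 ≤ m → ∑ j, d j * (σ ^ (i + 1)) (x j) = 0 := by
      intro i hi
      have h1 : σ (∑ j, c' j * (σ ^ i) (x j)) = 0 := by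
        rw [hA ⟨i, by omega⟩, map_zero]
      rw [map_sum] at h1
      have h2 := hA ⟨i + 1, by omega⟩
      simp only at h2
      have h3 : ∑ j, σ (c' j) * (σ ^ (i + 1)) (x j) = 0 := by
        rw [← h1]
        refine Finset.sum_congr rfl fun j _ => ?_
        rw [map_mul σ (c' j) ((σ ^ i) (x j)), pow_succ_apply]
      calc ∑ j, d j * (σ ^ (i + 1)) (x j)
          = (∑ j, σ (c' j) * (σ ^ (i + 1)) (x j)) - ∑ j, c' j * (σ ^ (i + 1)) (x j) := by
            rw [← Finset.sum_sub_distrib]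
            refine Finset.sum_congr rfl fun j _ => ?_
            simp only [hddef]
            ring
        _ = 0 := by rw [h3, h2, sub_zero]
    -- restricted family
    have hx' : LinearIndependent (fixedSubfield σ) fun j' : {j : ι // j ≠ j1} => σ (x j'.1) := by
      have h1 : LinearIndependent (fixedSubfield σ) fun j' : {j : ι // j ≠ j1} => x j'.1 :=
        hx.comp Subtype.val Subtype.val_injective
      exact h1.map' (sigmaLinear σ).toLinearMap (LinearEquiv.ker _)
    have hlt : Fintype.card {j : ι // j ≠ j1} < Fintype.card ι :=
      Fintype.card_subtype_lt (x := j1) (by simp)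
    have hcard1 : Fintype.card ι ≥ 1 := Fintype.card_pos_iff.mpr ⟨j1⟩
    have hcard' : Fintype.card {j : ι // j ≠ j1} ≤ m := by omega
    have IH := ih {j : ι // j ≠ j1} (fun j' => σ (x j'.1)) hcard' hx'
    have hd : ∀ j' : {j : ι // j ≠ j1}, d j'.1 = 0 := by
      apply Fintype.linearIndependent_iff.mp IH (fun j' => d j'.1)
      funext i
      simp only [Finset.sum_apply, Pi.smul_apply, smul_eq_mul, Pi.zero_apply]
      have hsub : ∑ j' : {j : ι // j ≠ j1}, d j'.1 * (σ ^ (i : ℕ)) (σ (x j'.1))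
          = ∑ j ∈ Finset.univ.erase j1, d j * (σ ^ (i : ℕ)) (σ (x j)) :=
        (Finset.sum_subtype (Finset.univ.erase j1) (by simp)
          (fun j => d j * (σ ^ (i : ℕ)) (σ (x j)))).symm
      rw [hsub, Finset.sum_erase _ (by rw [hdj1, zero_mul])]
      calc ∑ j, d j * (σ ^ (i : ℕ)) (σ (x j))
          = ∑ j, d j * (σ ^ ((i : ℕ) + 1)) (x j) := by
            refine Finset.sum_congr rfl fun j _ => ?_
            rw [pow_succ_apply']
        _ = 0 := hB i i.isLt
    have hfix : ∀ j, c' j ∈ fixedSubfield σ := by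
      intro j
      by_cases hj : j = j1
      · rw [hj]
        show σ (c' j1) = c' j1
        rw [hc'j1, map_one]
      · have h4 := hd ⟨j, hj⟩
        simp only [hddef, sub_eq_zero] at h4
        exact h4
    have hrow0 : ∑ j, (⟨c' j, hfix j⟩ : fixedSubfield σ) • x j = 0 := by
      have h00 := hA ⟨0, by omega⟩
      simp only [Fin.val_zero, pow_zero] at h00
      calc ∑ j, (⟨c' j, hfix j⟩ : fixedSubfield σ) • x j
          = ∑ j, c' j * x j := by
            refine Finset.sum_congr rfl fun j _ => ?_
            rfl
        _ = 0 := by rw [← h00]; rfl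
    have hzero := Fintype.linearIndependent_iff.mp hx (fun j => ⟨c' j, hfix j⟩) hrow0 j1
    rw [Subtype.ext_iff] at hzero
    simp only at hzero
    rw [hc'j1] at hzero
    exact one_ne_zero hzero

/-- Left multiplication by a matrix with linearly independent columns preserves rank. -/
theorem rank_mul_of_li {m p r : ℕ} (A : Matrix (Fin m) (Fin p) L)
    (h : LinearIndependent L (fun j : Fin p => fun i : Fin m => A i j))
    (E : Matrix (Fin p) (Fin r) L) : (A * E).rank = E.rank := by
  have hinj : Function.Injective A.mulVecLin := by
    rw [← LinearMap.ker_eq_bot, eq_bot_iff]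
    intro c hc
    rw [LinearMap.mem_ker] at hc
    have hz : ∀ j, c j = 0 := by
      apply Fintype.linearIndependent_iff.mp h c
      funext i
      simp only [Finset.sum_apply, Pi.smul_apply, smul_eq_mul, Pi.zero_apply]
      have hpt := congrFun hc i
      simp only [Matrix.mulVecLin_apply, Matrix.mulVec, dotProduct, Pi.zero_apply] at hpt
      rw [← hpt]
      refine Finset.sum_congr rfl fun j _ => ?_
      ring
    exact (Submodule.mem_bot _).mpr (funext hz)
  rw [Matrix.rank, Matrix.rank, Matrix.mulVecLin_mul, LinearMap.range_comp]
  exact (Submodule.equivMapOfInjective _ hinj _).finrank_eq.symm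

end Aux

/-- Let `α ∈ L` generate a normal basis of `L` over the fixed field `L^σ` of an
automorphism `σ` of order `n ≥ 1`. Let `k : Fin ν → Fin n` be injective, `e : Fin ν → L`,
and `ν ≤ t`, `t + 1 ≤ n`. With `Σ` the `n × ν` matrix `(σ^{k(j)+i}(α))`, `Σᵗ` its first
`t+1` rows, and `Eʳ` the `ν × r` matrix `((σ⁻¹)^j(e i))` for `r ≤ t`, one has
`rank(Σ·Eʳ) = rank(Eʳ) = rank(Σᵗ·Eʳ)`. -/
theorem rank_syndrome_matrices {L : Type*} [Field L] {n : ℕ} (hn : 1 ≤ n)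
    (σ : L ≃+* L) (hord : orderOf σ = n) (α : L)
    (b : Module.Basis (Fin n) (fixedSubfield σ) L)
    (hb : ∀ i : Fin n, (b i : L) = (σ ^ (i : ℕ)) α)
    (ν t : ℕ) (hνt : ν ≤ t) (htn : t + 1 ≤ n)
    (k : Fin ν → Fin n) (hk : Function.Injective k) (e : Fin ν → L)
    (r : ℕ) (hr : r ≤ t) :
    ((Matrix.of fun (i : Fin n) (j : Fin ν) => (σ ^ ((k j : ℕ) + (i : ℕ))) α) *
        (Matrix.of fun (i : Fin ν) (j : Fin r) => (σ⁻¹ ^ (j : ℕ)) (e i))).rank =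
      (Matrix.of fun (i : Fin ν) (j : Fin r) => (σ⁻¹ ^ (j : ℕ)) (e i)).rank ∧
    (Matrix.of fun (i : Fin ν) (j : Fin r) => (σ⁻¹ ^ (j : ℕ)) (e i)).rank =
      ((Matrix.of fun (i : Fin (t + 1)) (j : Fin ν) => (σ ^ ((k j : ℕ) + (i : ℕ))) α) *
        (Matrix.of fun (i : Fin ν) (j : Fin r) => (σ⁻¹ ^ (j : ℕ)) (e i))).rank := by
  have hx : LinearIndependent (fixedSubfield σ) (fun j : Fin ν => (σ ^ (k j : ℕ)) α) := by
    have h1 := b.linearIndependent.comp k hk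
    have h2 : (fun j : Fin ν => (σ ^ (k j : ℕ)) α) = ⇑b ∘ k := by
      funext j
      exact (hb (k j)).symm
    rwa [h2]
  have key : ∀ (m : ℕ), ν ≤ m →
      LinearIndependent L (fun (j : Fin ν) => fun (i : Fin m) =>
        (Matrix.of fun (i : Fin m) (j : Fin ν) => (σ ^ ((k j : ℕ) + (i : ℕ))) α) i j) := by
    intro m hm
    have h2 := moore_li σ m (Fin ν) (fun j => (σ ^ (k j : ℕ)) α) (by simpa using hm) hx
    have heq : (fun (j : Fin ν) => fun (i : Fin m) =>
          (Matrix.of fun (i : Fin m) (j : Fin ν) => (σ ^ ((k j : ℕ) + (i : ℕ))) α) i j)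
        = fun (j : Fin ν) => fun (i : Fin m) => (σ ^ (i : ℕ)) ((σ ^ (k j : ℕ)) α) := by
      funext j i
      show (σ ^ ((k j : ℕ) + (i : ℕ))) α = (σ ^ (i : ℕ)) ((σ ^ (k j : ℕ)) α)
      rw [add_comm, pow_add]
      rfl
    rw [heq]
    exact h2
  constructor
  · exact rank_mul_of_li _ (key n (by omega)) _
  · exact (rank_mul_of_li _ (key (t + 1) (by omega)) _).symm
end

section
/- Let e : Fin ν → L and for r ∈ ℕ let E^r be the ν × r matrix over L with entries E^r(i,j) = (σ⁻¹)^j(e(i)) (i ∈ Fin ν, j ∈ Fin r). Suppose μ ∈ ℕ satisfies rank(E^μ) = μ and rank(E^{μ+1}) = μ. Then rank(E^r) = μ for every r ≥ μ; in particular μ ≤ ν. -/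
/-- Let `σ` be an automorphism of a field `L` of finite order `n ≥ 1`, `e : Fin ν → L`,
and for `r ∈ ℕ` let `Eʳ` be the `ν × r` matrix with entries `(σ⁻¹)^j(e i)`. If
`rank(E^μ) = μ` and `rank(E^{μ+1}) = μ`, then `rank(Eʳ) = μ` for every `r ≥ μ`;
in particular `μ ≤ ν`. -/
theorem rank_E_stabilizes {L : Type*} [Field L] {n : ℕ} (hn : 1 ≤ n)
    (σ : L ≃+* L) (hord : orderOf σ = n)
    (ν : ℕ) (e : Fin ν → L) (μ : ℕ)
    (h1 : (Matrix.of fun (i : Fin ν) (j : Fin μ) => (σ⁻¹ ^ (j : ℕ)) (e i)).rank = μ)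
    (h2 : (Matrix.of fun (i : Fin ν) (j : Fin (μ + 1)) => (σ⁻¹ ^ (j : ℕ)) (e i)).rank = μ) :
    (∀ r : ℕ, μ ≤ r →
      (Matrix.of fun (i : Fin ν) (j : Fin r) => (σ⁻¹ ^ (j : ℕ)) (e i)).rank = μ) ∧
    μ ≤ ν := by
  classical
  -- the columns
  set c : ℕ → (Fin ν → L) := fun j i => (σ⁻¹ ^ j) (e i) with hc
  set S : ℕ → Submodule L (Fin ν → L) :=
    fun r => Submodule.span L (Set.range fun j : Fin r => c (j : ℕ)) with hS
  -- rank of E^r is the finrank of S r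
  have hrank : ∀ r : ℕ,
      (Matrix.of fun (i : Fin ν) (j : Fin r) => (σ⁻¹ ^ (j : ℕ)) (e i)).rank
        = Module.finrank L (S r) := by
    intro r
    rw [Matrix.rank_eq_finrank_span_cols]
    congr 1
  -- the semilinear map applying σ⁻¹ entrywise
  set τ : L →+* L := (σ⁻¹ : L ≃+* L).toRingHom with hτ
  haveI : RingHomSurjective τ := ⟨(σ⁻¹ : L ≃+* L).surjective⟩
  set f : (Fin ν → L) →ₛₗ[τ] (Fin ν → L) :=
    { toFun := fun v i => τ (v i)
      map_add' := by intro a b; funext i; simp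
      map_smul' := by
        intro m x; funext i
        simp [Pi.smul_apply, smul_eq_mul, map_mul] } with hf
  have hfc : ∀ j : ℕ, f (c j) = c (j + 1) := by
    intro j
    funext i
    show τ ((σ⁻¹ ^ j) (e i)) = (σ⁻¹ ^ (j + 1)) (e i)
    rw [pow_succ']
    rfl
  -- S is monotone
  have hSmono : ∀ {r s : ℕ}, r ≤ s → S r ≤ S s := by
    intro r s hrs
    apply Submodule.span_mono
    rintro x ⟨j, rfl⟩
    exact ⟨⟨(j : ℕ), lt_of_lt_of_le j.2 hrs⟩, rfl⟩
  -- S (μ+1) = S μ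
  haveI : FiniteDimensional L (S (μ + 1)) :=
    FiniteDimensional.finiteDimensional_submodule _
  have hSeq : S (μ + 1) = S μ := by
    symm
    apply Submodule.eq_of_le_of_finrank_eq (hSmono (Nat.le_succ μ))
    rw [← hrank, ← hrank, h1, h2]
  -- c μ ∈ S μ
  have hcμ : c μ ∈ S μ := by
    rw [← hSeq]
    exact Submodule.subset_span ⟨⟨μ, Nat.lt_succ_self μ⟩, rfl⟩
  -- f maps S μ into S μ
  have hstep : ∀ v ∈ S μ, f v ∈ S μ := by
    intro v hv
    have : f v ∈ Submodule.map f (S μ) := Submodule.mem_map_of_mem hv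
    rw [hS, Submodule.map_span, ← Set.range_comp] at this
    refine Submodule.span_le.mpr ?_ this
    rintro x ⟨j, rfl⟩
    show f (c (j : ℕ)) ∈ S μ
    rw [hfc]
    rcases lt_or_eq_of_le (Nat.succ_le_of_lt j.2) with h | h
    · exact Submodule.subset_span ⟨⟨(j : ℕ) + 1, h⟩, rfl⟩
    · rw [show (j : ℕ) + 1 = μ from h]; exact hcμ
  -- all columns lie in S μ
  have hall : ∀ j : ℕ, c j ∈ S μ := by
    intro j
    induction j with
    | zero =>
      rcases Nat.eq_zero_or_pos μ with h | h
      · have : (0 : ℕ) = μ := h.symm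
        rw [this]; exact hcμ
      · exact Submodule.subset_span ⟨⟨0, h⟩, rfl⟩
    | succ k ih =>
      rw [← hfc]
      exact hstep _ ih
  -- hence S r = S μ for r ≥ μ
  have hSr : ∀ r : ℕ, μ ≤ r → S r = S μ := by
    intro r hr
    refine le_antisymm ?_ (hSmono hr)
    apply Submodule.span_le.mpr
    rintro x ⟨j, rfl⟩
    exact hall (j : ℕ)
  constructor
  · intro r hr
    rw [hrank, hSr r hr, ← hrank, h1]
  · have := Matrix.rank_le_card_height
      (Matrix.of fun (i : Fin ν) (j : Fin μ) => (σ⁻¹ ^ (j : ℕ)) (e i))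
    rwa [h1, Fintype.card_fin] at this
end
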